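/- Let c ≠ r be a connecting point of a rooted cactus digraph (G, r) with δ⁻(c) = δ⁺(c) = n ≥ 2, incoming arcs (x_1,c),...,(x_n,c) and outgoing arcs (c,y_1),...,(c,y_n). Then the minimum sub-cactus digraph C(c) contains exactly one of the x_i and exactly one of the y_j; assuming these are x_1 and y_1, one has x_1 ≼ c, y_1 ≼ c, and c ≺ x_i and c ≺ y_j for all 2 ≤ i, j ≤ n. -/

import Mathlib

structure DirGraph (V : Type) where
  Adj : V → V → Prop
  loopless : ∀ v, ¬ Adj v v

namespace DirGraph

variable {V V' : Type}

/-- A walk is a nonempty list of vertices with consecutive arcs. -/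
def IsWalk (G : DirGraph V) : List V → Prop
  | [] => False
  | [_] => True
  | a :: b :: l => G.Adj a b ∧ G.IsWalk (b :: l)

def IsWalkFromTo (G : DirGraph V) (p : List V) (x y : V) : Prop :=
  G.IsWalk p ∧ p.head? = some x ∧ p.getLast? = some y

def StronglyConnected (G : DirGraph V) : Prop :=
  ∀ x y : V, ∃ p, G.IsWalkFromTo p x y

def IsSimplePath (G : DirGraph V) (p : List V) : Prop :=
  G.IsWalk p ∧ p.Nodup

def IsSimplePathFromTo (G : DirGraph V) (p : List V) (x y : V) : Prop :=
  G.IsSimplePath p ∧ p.head? = some x ∧ p.getLast? = some y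

/-- The arcs of a walk given as a list of vertices. -/
def arcs (p : List V) : List (V × V) := p.zip p.tail

/-- The preterminal (second-to-last) vertex of a path. -/
def preterminal (p : List V) : Option V := p.dropLast.getLast?

/-- A simple cycle: a closed walk whose vertices are distinct except for the
repeated endpoint. -/
def IsSimpleCycle (G : DirGraph V) (p : List V) : Prop :=
  G.IsWalk p ∧ 2 ≤ p.length ∧ p.head? = p.getLast? ∧ p.dropLast.Nodup

/-- Two cycles are equal as cycles when they have the same set of arcs. -/
def CycleEquiv (p q : List V) : Prop :=
  ∀ a : V × V, a ∈ arcs p ↔ a ∈ arcs q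

/-- Each arc lies in exactly one simple cycle (up to arc-set equality). -/
def CactusArcCond (G : DirGraph V) : Prop :=
  ∀ x y, G.Adj x y →
    (∃ p, G.IsSimpleCycle p ∧ (x, y) ∈ arcs p) ∧
    (∀ p q, G.IsSimpleCycle p → (x, y) ∈ arcs p →
      G.IsSimpleCycle q → (x, y) ∈ arcs q → CycleEquiv p q)

/-- A cactus digraph: strongly connected and each arc lies in exactly one
simple cycle. -/
def IsCactus (G : DirGraph V) : Prop :=
  G.StronglyConnected ∧ G.CactusArcCond

noncomputable def inDeg (G : DirGraph V) (v : V) : ℕ := Nat.card {u // G.Adj u v}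
noncomputable def outDeg (G : DirGraph V) (v : V) : ℕ := Nat.card {u // G.Adj v u}

/-- A connecting point: a vertex shared by two distinct simple cycles. -/
def IsConnectingPoint (G : DirGraph V) (v : V) : Prop :=
  ∃ p q, G.IsSimpleCycle p ∧ G.IsSimpleCycle q ∧ ¬ CycleEquiv p q ∧ v ∈ p ∧ v ∈ q

/-- An expansion of digraphs. -/
structure IsExpansion (G' : DirGraph V') (G : DirGraph V) (φ : V' → V) : Prop where
  map_adj : ∀ ⦃x y⦄, G'.Adj x y → G.Adj (φ x) (φ y)
  vert_surj : Function.Surjective φ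
  arc_surj : ∀ ⦃x y⦄, G.Adj x y → ∃ x' y', G'.Adj x' y' ∧ φ x' = x ∧ φ y' = y
  lift : ∀ ⦃x y⦄, G.Adj x y → ∀ y', φ y' = y → ∃! x', G'.Adj x' y' ∧ φ x' = x

/-- A doubly bidirectionally connected pair. -/
def Dbcp (G : DirGraph V) (p q : V) : Prop :=
  p ≠ q ∧
  (∃ P Q, G.IsSimplePathFromTo P p q ∧ G.IsSimplePathFromTo Q p q ∧
    preterminal P ≠ preterminal Q) ∧
  (∃ P Q, G.IsSimplePathFromTo P q p ∧ G.IsSimplePathFromTo Q q p ∧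
    preterminal P ≠ preterminal Q)

/-- Subgraph of a digraph: a vertex subset together with a subrelation of arcs
supported on it. -/
structure Subgraph (G : DirGraph V) where
  verts : Set V
  Adj : V → V → Prop
  adj_sub : ∀ ⦃x y⦄, Adj x y → G.Adj x y
  mem_left : ∀ ⦃x y⦄, Adj x y → x ∈ verts
  mem_right : ∀ ⦃x y⦄, Adj x y → y ∈ verts

def Subgraph.toDirGraph {G : DirGraph V} (H : Subgraph G) : DirGraph V :=
  ⟨H.Adj, fun v h => G.loopless v (H.adj_sub h)⟩

/-- A sub-cactus digraph: a nonempty subgraph that is strongly connected (on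
its vertex set) and in which each arc lies in exactly one simple cycle. -/
def Subgraph.IsCactus {G : DirGraph V} (H : Subgraph G) : Prop :=
  H.verts.Nonempty ∧
  (∀ x ∈ H.verts, ∀ y ∈ H.verts, ∃ p, H.toDirGraph.IsWalkFromTo p x y) ∧
  H.toDirGraph.CactusArcCond

def Subgraph.inter {G : DirGraph V} (H K : Subgraph G) : Subgraph G where
  verts := H.verts ∩ K.verts
  Adj x y := H.Adj x y ∧ K.Adj x y
  adj_sub := fun _ _ h => H.adj_sub h.1
  mem_left := fun _ _ h => ⟨H.mem_left h.1, K.mem_left h.2⟩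
  mem_right := fun _ _ h => ⟨H.mem_right h.1, K.mem_right h.2⟩

def Subgraph.le {G : DirGraph V} (H K : Subgraph G) : Prop :=
  H.verts ⊆ K.verts ∧ ∀ ⦃x y⦄, H.Adj x y → K.Adj x y

/-- The single-vertex subgraph. -/
def singleVert (G : DirGraph V) (v : V) : Subgraph G where
  verts := {v}
  Adj _ _ := False
  adj_sub := by intro _ _ h; exact h.elim
  mem_left := by intro _ _ h; exact h.elim
  mem_right := by intro _ _ h; exact h.elim

/-- The intersection of all sub-cactus digraphs of `G` containing `W`. -/
def CsubOf (G : DirGraph V) (W : Set V) : Subgraph G where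
  verts := {x | ∀ H : Subgraph G, H.IsCactus → W ⊆ H.verts → x ∈ H.verts}
  Adj x y := G.Adj x y ∧ ∀ H : Subgraph G, H.IsCactus → W ⊆ H.verts → H.Adj x y
  adj_sub := fun _ _ h => h.1
  mem_left := fun _ _ h H hH hW => H.mem_left (h.2 H hH hW)
  mem_right := fun _ _ h H hH hW => H.mem_right (h.2 H hH hW)

open Classical in
/-- `C G r v`: the minimum sub-cactus digraph containing `{r, v}` (and the
single vertex `{r}` when `v = r`). -/
noncomputable def C (G : DirGraph V) (r v : V) : Subgraph G :=
  if v = r then singleVert G r else CsubOf G {r, v}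

/-- The preorder on vertices of the rooted cactus digraph `(G, r)`:
`v ≼ w ↔ C(v) ⊆ C(w)`. -/
def pre (G : DirGraph V) (r v w : V) : Prop :=
  Subgraph.le (C G r v) (C G r w)

end DirGraph

namespace DirGraph

variable {V : Type}

@[simp] lemma arcs_nil : arcs ([] : List V) = [] := rfl
@[simp] lemma arcs_singleton (a : V) : arcs [a] = [] := rfl
@[simp] lemma arcs_cons_cons (a b : V) (l : List V) :
    arcs (a :: b :: l) = (a, b) :: arcs (b :: l) := rfl

lemma mem_arcs_iff {x y : V} {p : List V} :
    (x, y) ∈ arcs p ↔ ∃ l₁ l₂, p = l₁ ++ x :: y :: l₂ := by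
  constructor
  · intro h
    induction p with
    | nil => simp [arcs] at h
    | cons a l ih =>
      match l, h with
      | b :: l, h =>
        rw [arcs_cons_cons, List.mem_cons] at h
        rcases h with h | h
        · exact ⟨[], l, by simp [Prod.ext_iff] at h; simp [h.1, h.2]⟩
        · obtain ⟨l₁, l₂, he⟩ := ih h
          exact ⟨a :: l₁, l₂, by rw [List.cons_append, ← he]⟩
  · rintro ⟨l₁, l₂, rfl⟩
    induction l₁ with
    | nil => simp
    | cons a l₁ ih =>
      match l₁, ih with
      | [], _ => simp
      | b :: l₁, ih => simpa using Or.inr ih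

lemma arcs_subset_of_infix {p q : List V} (h : p <:+: q) {a : V × V}
    (ha : a ∈ arcs p) : a ∈ arcs q := by
  obtain ⟨x, y⟩ := a
  rw [mem_arcs_iff] at ha ⊢
  obtain ⟨l₁, l₂, rfl⟩ := ha
  obtain ⟨s, t, rfl⟩ := h
  exact ⟨s ++ l₁, l₂ ++ t, by simp⟩

lemma chain'_iff_arcs {R : V → V → Prop} {p : List V} :
    List.IsChain R p ↔ ∀ x y : V, (x, y) ∈ arcs p → R x y := by
  induction p with
  | nil => simp
  | cons a l ih =>
    match l with
    | [] => simp
    | b :: l =>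
      rw [List.isChain_cons_cons, ih, arcs_cons_cons]
      constructor
      · rintro ⟨h1, h2⟩ x y hxy
        rcases List.mem_cons.1 hxy with h | h
        · cases h; exact h1
        · exact h2 _ _ h
      · intro h
        exact ⟨h a b (by simp), fun x y hxy => h x y (List.mem_cons_of_mem _ hxy)⟩

lemma mem_arcs_append_iff {p q : List V} (h : p.getLast? = q.head?) {a : V × V} :
    a ∈ arcs (p ++ q.tail) ↔ a ∈ arcs p ∨ a ∈ arcs q := by
  induction p with
  | nil =>
    simp only [List.getLast?_nil] at h
    have : q = [] := by
      cases q with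
      | nil => rfl
      | cons x l => simp at h
    simp [this]
  | cons u p ih =>
    match p with
    | [] =>
      simp only [List.getLast?_singleton] at h
      cases q with
      | nil => simp at h
      | cons v l =>
        simp only [List.head?_cons, Option.some_inj] at h
        subst h
        simp only [List.tail_cons, List.singleton_append, arcs_singleton,
          List.not_mem_nil, false_or]
    | b :: p =>
      have h' : (b :: p).getLast? = q.head? := by
        rwa [List.getLast?_cons_cons] at h
      have := ih h'
      simp only [List.cons_append, arcs_cons_cons, List.mem_cons, this]
      tauto

lemma mem_dropLast_of_arcs_src {z w : V} {s : List V} (h : (z, w) ∈ arcs s) :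
    z ∈ s.dropLast := by
  obtain ⟨l₁, l₂, rfl⟩ := mem_arcs_iff.1 h
  rw [show l₁ ++ z :: w :: l₂ = (l₁ ++ [z]) ++ (w :: l₂) by simp,
    List.dropLast_append_of_ne_nil (by simp)]
  simp

lemma mem_tail_of_arcs_tgt {z w : V} {s : List V} (h : (z, w) ∈ arcs s) :
    w ∈ s.tail := by
  obtain ⟨l₁, l₂, rfl⟩ := mem_arcs_iff.1 h
  cases l₁ with
  | nil => simp
  | cons a l₁ => simp

lemma adj_of_arcs {R : V → V → Prop} {p : List V} (hp : List.IsChain R p)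
    {z w : V} (h : (z, w) ∈ arcs p) : R z w := chain'_iff_arcs.1 hp z w h

section Infra

variable {R : V → V → Prop} {G : DirGraph V}

lemma isWalk_iff (G : DirGraph V) : ∀ p : List V, G.IsWalk p ↔ p ≠ [] ∧ List.IsChain G.Adj p
  | [] => by simp [IsWalk]
  | [a] => by simp [IsWalk]
  | a :: b :: l => by
    rw [IsWalk, isWalk_iff G (b :: l), List.isChain_cons_cons]
    simp [and_assoc]

lemma exists_nodup_chain' :
    ∀ n (p : List V), p.length ≤ n → List.IsChain R p → p ≠ [] →
    ∃ t : List V, List.IsChain R t ∧ t.Nodup ∧ t.head? = p.head? ∧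
      t.getLast? = p.getLast? ∧ (∀ a ∈ arcs t, a ∈ arcs p) ∧ ∀ v ∈ t, v ∈ p := by
  intro n
  induction n with
  | zero => intro p hlen _ hne; cases p <;> simp_all
  | succ n ih =>
    rintro (_ | ⟨a, l⟩) hlen hch hne
    · exact absurd rfl hne
    by_cases ha : a ∈ l
    · obtain ⟨s, t, rfl⟩ := List.append_of_mem ha
      have hsuff : (a :: t) <:+ (a :: (s ++ a :: t)) := ⟨a :: s, rfl⟩
      have hch' : List.IsChain R (a :: t) := hch.suffix hsuff
      have hlen' : (a :: t).length ≤ n := by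
        simp only [List.length_cons, List.length_append] at hlen ⊢; omega
      obtain ⟨u, h1, h2, h3, h4, h5, h6⟩ := ih (a :: t) hlen' hch' (by simp)
      refine ⟨u, h1, h2, by rw [h3]; rfl, ?_, fun b hb => ?_, fun v hv => ?_⟩
      · obtain ⟨g, hg⟩ : ∃ g, (a :: t).getLast? = some g :=
          ⟨_, List.getLast?_eq_getLast (by simp)⟩
        rw [h4, show a :: (s ++ a :: t) = (a :: s) ++ (a :: t) by simp,
          List.getLast?_append, hg]
        rfl
      · exact arcs_subset_of_infix hsuff.isInfix (h5 b hb)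
      · exact hsuff.subset (h6 v hv)
    · cases l with
      | nil => exact ⟨[a], by simp⟩
      | cons b l =>
        have hch' : List.IsChain R (b :: l) := hch.tail
        obtain ⟨u, h1, h2, h3, h4, h5, h6⟩ := ih (b :: l)
          (by simp at hlen ⊢; omega) hch' (by simp)
        have hune : u ≠ [] := by rintro rfl; simp at h3
        refine ⟨a :: u, ?_, ?_, by simp, ?_, fun c hc => ?_, fun v hv => ?_⟩
        · rw [List.isChain_cons]
          refine ⟨fun y hy => ?_, h1⟩
          rw [h3] at hy
          simp only [List.head?_cons, Option.mem_def, Option.some_inj] at hy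
          subst hy
          exact (List.isChain_cons_cons.1 hch).1
        · exact List.nodup_cons.2 ⟨fun hmem => ha (h6 a hmem), h2⟩
        · rw [List.getLast?_cons_cons]
          rw [show (a :: u).getLast? = u.getLast? by
            cases u with | nil => simp at h3 | cons c u => simp]
          exact h4
        · cases u with
          | nil => simp at h3
          | cons d u =>
            simp only [List.head?_cons, Option.some_inj] at h3
            subst h3
            rw [arcs_cons_cons, List.mem_cons] at hc
            rcases hc with rfl | hc
            · simp
            · exact List.mem_cons_of_mem _ (h5 _ hc)
        · rcases List.mem_cons.1 hv with rfl | hv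
          · simp
          · exact List.mem_cons_of_mem _ (h6 v hv)

lemma exists_nodup_chain'_of_chain' {p : List V} (hch : List.IsChain R p) (hne : p ≠ []) :
    ∃ t : List V, List.IsChain R t ∧ t.Nodup ∧ t.head? = p.head? ∧
      t.getLast? = p.getLast? ∧ (∀ a ∈ arcs t, a ∈ arcs p) ∧ ∀ v ∈ t, v ∈ p :=
  exists_nodup_chain' p.length p le_rfl hch hne

lemma length_two_le {p : List V} {x y : V} (hh : p.head? = some x)
    (hl : p.getLast? = some y) (hxy : x ≠ y) : 2 ≤ p.length := by
  match p with
  | [] => simp at hh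
  | [a] => simp_all
  | a :: b :: l => simp

lemma eq_singleton_of_nodup {p : List V} {x : V} (hnd : p.Nodup)
    (hh : p.head? = some x) (hl : p.getLast? = some x) : p = [x] := by
  match p with
  | [] => simp at hh
  | [a] => simp_all
  | a :: b :: l =>
    have ha : a = x := by simpa using hh
    rw [List.getLast?_cons_cons] at hl
    have hx : x ∈ b :: l := List.mem_of_mem_getLast? hl
    exact absurd (ha ▸ hx) (List.nodup_cons.1 hnd).1

lemma exists_first_arc {p : List V} (h : 2 ≤ p.length) :
    ∃ a b, p.head? = some a ∧ p.tail.head? = some b ∧ (a, b) ∈ arcs p := by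
  match p with
  | a :: b :: l => exact ⟨a, b, rfl, rfl, by simp⟩

lemma exists_last_arc : ∀ (p : List V), 2 ≤ p.length →
    ∃ a b, p.dropLast.getLast? = some a ∧ p.getLast? = some b ∧ (a, b) ∈ arcs p
  | [a, b], _ => ⟨a, b, by simp⟩
  | a :: b :: c :: l, _ => by
    obtain ⟨u, v, h1, h2, h3⟩ := exists_last_arc (b :: c :: l) (by simp)
    refine ⟨u, v, ?_, by simpa using h2, List.mem_cons_of_mem _ h3⟩
    rw [show (a :: b :: c :: l).dropLast = a :: (b :: c :: l).dropLast from rfl]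
    rw [show (b :: c :: l).dropLast = b :: (c :: l).dropLast from rfl] at h1 ⊢
    simpa using h1

lemma not_mem_dropLast_of_getLast? {p : List V} {x : V} (hnd : p.Nodup)
    (hl : p.getLast? = some x) : x ∉ p.dropLast := by
  intro hmem
  have hne : p ≠ [] := by rintro rfl; simp at hl
  have hx : p.getLast hne = x := by
    rw [List.getLast?_eq_getLast hne] at hl
    exact Option.some_inj.1 hl
  have hp : p.dropLast ++ [x] = p := by
    rw [← hx]; exact List.dropLast_append_getLast hne
  rw [← hp] at hnd
  rcases List.nodup_append.1 hnd with ⟨-, -, hdisj⟩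
  exact hdisj x hmem x (by simp) rfl

lemma arcs_tgt_of_nodup {p : List V} {u c : V} (hnd : p.Nodup)
    (hl : p.getLast? = some c) (h : (u, c) ∈ arcs p) :
    p.dropLast.getLast? = some u := by
  obtain ⟨l₁, l₂, rfl⟩ := mem_arcs_iff.1 h
  have hl₂ : l₂ = [] := by
    rcases l₂ with _ | ⟨w, l₂⟩
    · rfl
    exfalso
    have h2 : (w :: l₂).getLast? = some c := by
      rw [show l₁ ++ u :: c :: w :: l₂ = (l₁ ++ [u, c]) ++ (w :: l₂) by simp,
        List.getLast?_append] at hl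
      cases h3 : (w :: l₂).getLast? with
      | none => simp [List.getLast?_eq_none_iff] at h3
      | some g =>
        rw [h3] at hl
        exact congrArg some (by simpa using hl)
    have hc : c ∈ w :: l₂ := List.mem_of_mem_getLast? h2
    have hnd' := (List.nodup_append.1 hnd).2.1
    rw [List.nodup_cons, List.nodup_cons] at hnd'
    exact hnd'.2.1 hc
  subst hl₂
  rw [show l₁ ++ [u, c] = (l₁ ++ [u]) ++ [c] by simp, List.dropLast_concat,
    List.getLast?_concat]

lemma arcs_src_of_nodup {p : List V} {c y : V} (hnd : p.Nodup)
    (hh : p.head? = some c) (h : (c, y) ∈ arcs p) :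
    p.tail.head? = some y := by
  obtain ⟨l₁, l₂, rfl⟩ := mem_arcs_iff.1 h
  have hl₁ : l₁ = [] := by
    rcases l₁ with _ | ⟨w, l₁⟩
    · rfl
    exfalso
    simp only [List.cons_append, List.head?_cons, Option.some_inj] at hh
    subst hh
    rw [List.cons_append, List.nodup_cons] at hnd
    exact hnd.1 (by simp)
  subst hl₁
  rfl

end Infra

section Cycles

variable {R : V → V → Prop} {G : DirGraph V}

lemma mem_arcs_iff_getElem {p : List V} {x y : V} :
    (x, y) ∈ arcs p ↔ ∃ i, ∃ h : i + 1 < p.length, p[i] = x ∧ p[i + 1] = y := by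
  unfold arcs
  rw [List.mem_iff_getElem]
  constructor
  · rintro ⟨i, hi, hp⟩
    have hlen : i + 1 < p.length := by
      simp only [List.length_zip, List.length_tail, lt_min_iff] at hi
      omega
    refine ⟨i, hlen, ?_⟩
    rw [List.getElem_zip] at hp
    have := List.getElem_tail (l := p) (i := i) (by simp [List.length_tail]; omega)
    rw [this] at hp
    exact ⟨congrArg Prod.fst hp, congrArg Prod.snd hp⟩
  · rintro ⟨i, hi, hx, hy⟩
    have hi' : i < (p.zip p.tail).length := by
      simp only [List.length_zip, List.length_tail, lt_min_iff]; omega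
    refine ⟨i, hi', ?_⟩
    rw [List.getElem_zip, List.getElem_tail (l := p) (i := i) (by simp [List.length_tail]; omega), hx, hy]

lemma cycle_getElem_head {G : DirGraph V} {Z : List V} (hZ : G.IsSimpleCycle Z) :
    ∀ h0 : 0 < Z.length, ∀ h1 : Z.length - 1 < Z.length, Z[0] = Z[Z.length - 1] := by
  intro h0 h1
  have hh := hZ.2.2.1
  rw [List.head?_eq_getElem?, List.getLast?_eq_getElem?, List.getElem?_eq_getElem h0,
    List.getElem?_eq_getElem h1] at hh
  exact Option.some_inj.1 hh

lemma cycle_unique_out {G : DirGraph V} {Z : List V} (hZ : G.IsSimpleCycle Z)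
    {u a b : V} (ha : (u, a) ∈ arcs Z) (hb : (u, b) ∈ arcs Z) : a = b := by
  obtain ⟨i, hi, hxi, hyi⟩ := mem_arcs_iff_getElem.1 ha
  obtain ⟨j, hj, hxj, hyj⟩ := mem_arcs_iff_getElem.1 hb
  have hnd := hZ.2.2.2
  have hlen : Z.dropLast.length = Z.length - 1 := by simp
  have hij : i = j := by
    have h1 : i < Z.dropLast.length := by omega
    have h2 : j < Z.dropLast.length := by omega
    have := (hnd.getElem_inj_iff (hi := h1) (hj := h2)).1 ?_
    · exact this
    · rw [List.getElem_dropLast, List.getElem_dropLast, hxi, hxj]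
  subst hij
  rw [← hyi, ← hyj]

lemma cycle_unique_in {G : DirGraph V} {Z : List V} (hZ : G.IsSimpleCycle Z)
    {u a b : V} (ha : (a, u) ∈ arcs Z) (hb : (b, u) ∈ arcs Z) : a = b := by
  obtain ⟨i, hi, hxi, hyi⟩ := mem_arcs_iff_getElem.1 ha
  obtain ⟨j, hj, hxj, hyj⟩ := mem_arcs_iff_getElem.1 hb
  have hn : 2 ≤ Z.length := hZ.2.1
  have hdl : Z.dropLast.length = Z.length - 1 := by simp
  have inj : ∀ k l : ℕ, ∀ hk : k < Z.length - 1, ∀ hl : l < Z.length - 1,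
      Z[k]'(by omega) = Z[l]'(by omega) → k = l := by
    intro k l hk hl hkl
    have h1 : k < Z.dropLast.length := by omega
    have h2 : l < Z.dropLast.length := by omega
    refine (hZ.2.2.2.getElem_inj_iff (hi := h1) (hj := h2)).1 ?_
    rw [List.getElem_dropLast, List.getElem_dropLast]
    exact hkl
  have hhead : Z[0]'(by omega) = Z[Z.length - 1]'(by omega) :=
    cycle_getElem_head hZ (by omega) (by omega)
  by_cases hc1 : i + 1 < Z.length - 1
  · by_cases hc2 : j + 1 < Z.length - 1
    · have hij : i + 1 = j + 1 := inj _ _ hc1 hc2 (hyi.trans hyj.symm)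
      have : i = j := by omega
      subst this; rw [← hxi, ← hxj]
    · have h0u : Z[0]'(by omega) = u := by
        rw [hhead, show (Z[Z.length - 1]'(by omega) : V) = Z[j + 1]'(by omega) from
          by congr 1; omega]
        exact hyj
      have := inj 0 (i + 1) (by omega) hc1 (by rw [h0u, hyi])
      omega
  · by_cases hc2 : j + 1 < Z.length - 1
    · have h0u : Z[0]'(by omega) = u := by
        rw [hhead, show (Z[Z.length - 1]'(by omega) : V) = Z[i + 1]'(by omega) from
          by congr 1; omega]
        exact hyi
      have := inj 0 (j + 1) (by omega) hc2 (by rw [h0u, hyj])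
      omega
    · have : i = j := by omega
      subst this; rw [← hxi, ← hxj]

lemma cycle_in_of_out {G : DirGraph V} {Z : List V} (hZ : G.IsSimpleCycle Z)
    {w z : V} (h : (w, z) ∈ arcs Z) : ∃ a, (a, w) ∈ arcs Z := by
  obtain ⟨i, hi, hx, hy⟩ := mem_arcs_iff_getElem.1 h
  have hn : 2 ≤ Z.length := hZ.2.1
  rcases Nat.eq_zero_or_pos i with rfl | hpos
  · have hlt : Z.length - 2 + 1 < Z.length := by omega
    refine ⟨Z[Z.length - 2]'(by omega), mem_arcs_iff_getElem.2 ⟨Z.length - 2, hlt, rfl, ?_⟩⟩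
    rw [show (Z[Z.length - 2 + 1]'hlt : V) = Z[Z.length - 1]'(by omega) from by congr 1; omega,
      ← cycle_getElem_head hZ (by omega) (by omega)]
    exact hx
  · have hlt : i - 1 + 1 < Z.length := by omega
    refine ⟨Z[i - 1]'(by omega), mem_arcs_iff_getElem.2 ⟨i - 1, hlt, rfl, ?_⟩⟩
    rw [show (Z[i - 1 + 1]'hlt : V) = Z[i]'(by omega) from by congr 1; omega]
    exact hx

lemma cycle_out_of_in {G : DirGraph V} {Z : List V} (hZ : G.IsSimpleCycle Z)
    {w z : V} (h : (z, w) ∈ arcs Z) : ∃ y, (w, y) ∈ arcs Z := by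
  obtain ⟨i, hi, hx, hy⟩ := mem_arcs_iff_getElem.1 h
  have hn : 2 ≤ Z.length := hZ.2.1
  by_cases hc : i + 2 < Z.length
  · exact ⟨Z[i + 2]'hc, mem_arcs_iff_getElem.2 ⟨i + 1, hc, hy, rfl⟩⟩
  · have hi1 : i + 1 = Z.length - 1 := by omega
    have h1 : 0 + 1 < Z.length := by omega
    refine ⟨Z[1]'(by omega), mem_arcs_iff_getElem.2 ⟨0, h1, ?_, rfl⟩⟩
    rw [cycle_getElem_head hZ (by omega) (by omega),
      show (Z[Z.length - 1]'(by omega) : V) = Z[i + 1]'(by omega) from by congr 1; omega]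
    exact hy

end Cycles

section Paths

variable {R : V → V → Prop} {G : DirGraph V}

lemma head?_dropLast_of_two_le {p : List V} (h : 2 ≤ p.length) :
    p.dropLast.head? = p.head? := by
  match p with
  | a :: b :: l => simp

lemma head?_append_left {p q : List V} (hp : p ≠ []) : (p ++ q).head? = p.head? := by
  cases p with
  | nil => exact absurd rfl hp
  | cons a l => simp

lemma getLast?_append_right {p q : List V} (hq : q ≠ []) :
    (p ++ q).getLast? = q.getLast? := by
  rw [List.getLast?_append]
  obtain ⟨g, hg⟩ : ∃ g, q.getLast? = some g := ⟨_, List.getLast?_eq_getLast hq⟩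
  rw [hg]; rfl

lemma getLast?_append_tail {p q : List V} (hp : p ≠ [])
    (h : p.getLast? = q.head?) (hq : q ≠ []) :
    (p ++ q.tail).getLast? = q.getLast? := by
  cases q with
  | nil => exact absurd rfl hq
  | cons u q' =>
    cases q' with
    | nil => simpa using h
    | cons w t =>
      rw [List.tail_cons, getLast?_append_right (by simp), List.getLast?_cons_cons]

lemma chain'_append_tail {p q : List V} (hp : List.IsChain R p) (hq : List.IsChain R q)
    (h : p.getLast? = q.head?) : List.IsChain R (p ++ q.tail) := by
  refine hp.append hq.tail ?_
  intro x hx y hy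
  cases q with
  | nil => simp at hy
  | cons u q' =>
    cases q' with
    | nil => simp at hy
    | cons w t =>
      simp only [List.head?_cons, List.tail_cons, Option.mem_def, Option.some_inj] at hx hy h
      have hxu : x = u := by rw [hx] at h; exact Option.some_inj.1 h
      subst hxu; subst hy
      exact (List.isChain_cons_cons.1 hq).1

lemma rotate_cycle {Z : List V} (hZ : G.IsSimpleCycle Z) {a x : V}
    (h : (a, x) ∈ arcs Z) :
    ∃ Z', G.IsSimpleCycle Z' ∧ Z'.head? = some x ∧ Z'.getLast? = some x ∧
      ∀ b : V × V, b ∈ arcs Z' ↔ b ∈ arcs Z := by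
  obtain ⟨l₁, l₂, hZeq⟩ := mem_arcs_iff.1 h
  rcases l₂ with _ | ⟨w, l₂⟩
  · have hlast : Z.getLast? = some x := by
      rw [hZeq, show l₁ ++ [a, x] = (l₁ ++ [a]) ++ [x] by simp, List.getLast?_concat]
    exact ⟨Z, hZ, hZ.2.2.1.trans hlast, hlast, fun b => Iff.rfl⟩
  · set M : List V := l₁ ++ [a] with hM
    set N : List V := x :: w :: l₂ with hN
    have hZMN : Z = M ++ N := by rw [hZeq]; simp [hM, hN]
    have hMne : M ≠ [] := by simp [hM]
    have hNne : N ≠ [] := by simp [hN]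
    have hZ2 : Z = (M ++ [x]) ++ N.tail := by rw [hZMN]; simp [hM, hN]
    have hMxl : (M ++ [x]).getLast? = some x := List.getLast?_concat
    have hMxh : (M ++ [x]).head? = M.head? := head?_append_left hMne
    have hNh : N.head? = some x := rfl
    have hNl_eq : N.getLast? = M.head? := by
      have h1 : Z.head? = M.head? := by rw [hZMN]; exact head?_append_left hMne
      have h2 : Z.getLast? = N.getLast? := by rw [hZMN]; exact getLast?_append_right hNne
      rw [← h1, ← h2]; exact hZ.2.2.1.symm
    have harcZ : ∀ b : V × V, b ∈ arcs Z ↔ b ∈ arcs (M ++ [x]) ∨ b ∈ arcs N := by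
      intro b
      rw [hZ2]
      exact mem_arcs_append_iff (by rw [hMxl, hNh])
    have harcZ' : ∀ b : V × V, b ∈ arcs (N ++ (M ++ [x]).tail) ↔
        b ∈ arcs N ∨ b ∈ arcs (M ++ [x]) := fun b =>
      mem_arcs_append_iff (by rw [hNl_eq, hMxh])
    have harcs : ∀ b : V × V, b ∈ arcs (N ++ (M ++ [x]).tail) ↔ b ∈ arcs Z := by
      intro b; rw [harcZ', harcZ]; tauto
    have hMtail : (M ++ [x]).tail = M.tail ++ [x] := List.tail_append_of_ne_nil hMne
    have hconcat : N ++ (M ++ [x]).tail = (N ++ M.tail) ++ [x] := by rw [hMtail]; simp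
    refine ⟨N ++ (M ++ [x]).tail, ⟨?_, ?_, ?_, ?_⟩, ?_, ?_, harcs⟩
    · rw [isWalk_iff]
      refine ⟨by simp [hN], chain'_iff_arcs.2 fun z w' hb => ?_⟩
      have hZc : List.IsChain G.Adj Z := ((isWalk_iff G Z).1 hZ.1).2
      exact adj_of_arcs hZc ((harcs _).1 hb)
    · rw [List.length_append]
      have : 2 ≤ N.length := by simp [hN]
      omega
    · rw [hconcat, List.getLast?_concat, List.append_assoc, head?_append_left hNne, hNh]
    · rw [hconcat, List.dropLast_concat]
      obtain ⟨g, hg⟩ : ∃ g, N.getLast? = some g := ⟨_, List.getLast?_eq_getLast hNne⟩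
      have hMhead : M.head? = some g := by rw [← hNl_eq, hg]
      have hgN : N.getLast hNne = g := by
        rw [List.getLast?_eq_getLast hNne] at hg; exact Option.some_inj.1 hg
      have hNdec : N.dropLast ++ [g] = N := by
        rw [← hgN]; exact List.dropLast_append_getLast hNne
      have hgM : M.head hMne = g := by
        rw [List.head?_eq_head hMne] at hMhead; exact Option.some_inj.1 hMhead
      have hMdec : g :: M.tail = M := by rw [← hgM]; exact List.cons_head_tail hMne
      have hZdl : Z.dropLast = M ++ N.dropLast := by
        rw [hZMN, List.dropLast_append_of_ne_nil hNne]
      have hnd : (M ++ N.dropLast).Nodup := hZdl ▸ hZ.2.2.2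
      have hperm : (N ++ M.tail) = N.dropLast ++ M := by
        rw [← hNdec, ← hMdec]; simp
      rw [hperm]
      exact (List.perm_append_comm).nodup hnd
    · rw [head?_append_left hNne, hNh]
    · rw [hconcat, List.getLast?_concat]

lemma cycle_to_path {Z : List V} (hZ : G.IsSimpleCycle Z) {u v : V}
    (h : (u, v) ∈ arcs Z) :
    ∃ S, List.IsChain G.Adj S ∧ S.Nodup ∧ S.head? = some v ∧ S.getLast? = some u ∧
      ∀ b ∈ arcs S, b ∈ arcs Z := by
  obtain ⟨Z', hZ', hh, hl, harcs⟩ := rotate_cycle hZ h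
  have hZ'c : List.IsChain G.Adj Z' := ((isWalk_iff G Z').1 hZ'.1).2
  obtain ⟨a', b', h1, h2, h3⟩ := exists_last_arc Z' hZ'.2.1
  have hb' : b' = v := by rw [hl] at h2; exact (Option.some_inj.1 h2).symm
  subst hb'
  have ha' : a' = u := cycle_unique_in hZ ((harcs _).1 h3) h
  subst ha'
  refine ⟨Z'.dropLast, hZ'c.prefix (List.dropLast_prefix _), hZ'.2.2.2, ?_, h1, ?_⟩
  · rw [head?_dropLast_of_two_le hZ'.2.1, hh]
  · intro b hb
    exact (harcs _).1 (arcs_subset_of_infix (List.dropLast_prefix _).isInfix hb)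

lemma cycle_path_between {Z : List V} (hZ : G.IsSimpleCycle Z) {a x u v : V}
    (hin : (a, x) ∈ arcs Z) (hsrc : (u, v) ∈ arcs Z) :
    ∃ S, List.IsChain G.Adj S ∧ S.Nodup ∧ S.head? = some x ∧ S.getLast? = some u ∧
      ∀ b ∈ arcs S, b ∈ arcs Z := by
  obtain ⟨Z₁, hZ₁, hh, hl, harcs⟩ := rotate_cycle hZ hin
  have hZ₁c : List.IsChain G.Adj Z₁ := ((isWalk_iff G Z₁).1 hZ₁.1).2
  have husrc : (u, v) ∈ arcs Z₁ := (harcs _).2 hsrc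
  have hu : u ∈ Z₁.dropLast := mem_dropLast_of_arcs_src husrc
  obtain ⟨A, B, hAB⟩ := List.append_of_mem hu
  have hpre : (A ++ [u]) <+: Z₁.dropLast := ⟨B, by rw [hAB]; simp⟩
  refine ⟨A ++ [u], ?_, ?_, ?_, List.getLast?_concat, ?_⟩
  · exact (hZ₁c.prefix (List.dropLast_prefix _)).prefix hpre
  · exact hZ₁.2.2.2.sublist hpre.sublist
  · have h1 : (A ++ [u]).head? = Z₁.dropLast.head? := by
      conv_rhs => rw [hAB, show A ++ u :: B = (A ++ [u]) ++ B by simp]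
      exact (head?_append_left (by simp)).symm
    rw [h1, head?_dropLast_of_two_le hZ₁.2.1, hh]
  · intro b hb
    exact (harcs _).1 (arcs_subset_of_infix (List.dropLast_prefix _).isInfix
      (arcs_subset_of_infix hpre.isInfix hb))

lemma path_to_cycle {S : List V} {u v : V} (hS : List.IsChain G.Adj S) (hnd : S.Nodup)
    (hh : S.head? = some v) (hl : S.getLast? = some u) (hadj : G.Adj u v) :
    G.IsSimpleCycle (S ++ [v]) ∧ (u, v) ∈ arcs (S ++ [v]) ∧
      ∀ b : V × V, b ∈ arcs (S ++ [v]) ↔ b ∈ arcs S ∨ b = (u, v) := by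
  have hSne : S ≠ [] := by rintro rfl; simp at hh
  have harcs : ∀ b : V × V, b ∈ arcs (S ++ [v]) ↔ b ∈ arcs S ∨ b = (u, v) := by
    intro b
    have h0 : b ∈ arcs (S ++ [u, v].tail) ↔ b ∈ arcs S ∨ b ∈ arcs [u, v] :=
      mem_arcs_append_iff (by rw [hl]; rfl)
    simp only [List.tail_cons] at h0
    rw [h0]
    constructor
    · rintro (h | h)
      · exact Or.inl h
      · right; simpa using h
    · rintro (h | rfl)
      · exact Or.inl h
      · right; simp
  have hlen : 1 ≤ S.length := by
    cases S with | nil => exact absurd rfl hSne | cons a l => simp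
  refine ⟨⟨?_, ?_, ?_, ?_⟩, (harcs _).2 (Or.inr rfl), harcs⟩
  · rw [isWalk_iff]
    refine ⟨by simp, chain'_iff_arcs.2 fun z w hb => ?_⟩
    rcases (harcs _).1 hb with h | h
    · exact adj_of_arcs hS h
    · cases h; exact hadj
  · rw [List.length_append]; simp; omega
  · rw [head?_append_left hSne, List.getLast?_concat, hh]
  · rw [List.dropLast_concat]; exact hnd

lemma isSimplePathFromTo_iff {p : List V} {x y : V} :
    G.IsSimplePathFromTo p x y ↔
      List.IsChain G.Adj p ∧ p.Nodup ∧ p.head? = some x ∧ p.getLast? = some y := by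
  unfold IsSimplePathFromTo IsSimplePath
  rw [isWalk_iff]
  constructor
  · rintro ⟨⟨⟨hne, hch⟩, hnd⟩, hh, hl⟩; exact ⟨hch, hnd, hh, hl⟩
  · rintro ⟨hch, hnd, hh, hl⟩
    refine ⟨⟨⟨?_, hch⟩, hnd⟩, hh, hl⟩
    rintro rfl; simp at hh

lemma exists_path_of_walkFromTo {p : List V} {x y : V} (h : G.IsWalkFromTo p x y) :
    ∃ t, G.IsSimplePathFromTo t x y ∧ (∀ a ∈ arcs t, a ∈ arcs p) ∧ ∀ v ∈ t, v ∈ p := by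
  obtain ⟨hw, hh, hl⟩ := h
  rw [isWalk_iff] at hw
  obtain ⟨t, h1, h2, h3, h4, h5, h6⟩ := exists_nodup_chain'_of_chain' hw.2 hw.1
  exact ⟨t, isSimplePathFromTo_iff.2 ⟨h1, h2, h3.trans hh, h4.trans hl⟩, h5, h6⟩

lemma exists_path (hsc : G.StronglyConnected) (x y : V) :
    ∃ t, G.IsSimplePathFromTo t x y := by
  obtain ⟨p, hp⟩ := hsc x y
  obtain ⟨t, ht, -, -⟩ := exists_path_of_walkFromTo hp
  exact ⟨t, ht⟩

lemma path_unique (hcac : G.CactusArcCond) (hsc : G.StronglyConnected) :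
    ∀ {P Q : List V} {x y : V},
      G.IsSimplePathFromTo P x y → G.IsSimplePathFromTo Q x y → P = Q := by
  suffices key : ∀ n (P Q : List V) (x y : V), P.length ≤ n →
      G.IsSimplePathFromTo P x y → G.IsSimplePathFromTo Q x y → P = Q by
    intro P Q x y hP hQ; exact key P.length P Q x y le_rfl hP hQ
  intro n
  induction n with
  | zero =>
    intro P Q x y hlen hP _
    rw [isSimplePathFromTo_iff] at hP
    cases P with
    | nil => simp at hP
    | cons a l => simp at hlen
  | succ n ih =>
    intro P Q x y hlen hP hQ
    rw [isSimplePathFromTo_iff] at hP hQ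
    obtain ⟨hPc, hPn, hPh, hPl⟩ := hP
    obtain ⟨hQc, hQn, hQh, hQl⟩ := hQ
    rcases P with _ | ⟨a, P'⟩
    · simp at hPh
    have hax : a = x := by simpa using hPh
    subst hax
    rcases P' with _ | ⟨p1, P''⟩
    · have hy : y = a := by simpa using hPl.symm
      subst hy
      exact (eq_singleton_of_nodup hQn hQh hQl).symm
    rcases Q with _ | ⟨b, Q'⟩
    · simp at hQh
    have hb : b = a := by simpa using hQh
    subst hb
    rcases Q' with _ | ⟨q1, Q''⟩
    · have hy : y = b := by simpa using hQl.symm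
      subst hy
      exact eq_singleton_of_nodup hPn hPh hPl
    by_cases hp1q1 : p1 = q1
    · subst hp1q1
      have hPt : G.IsSimplePathFromTo (p1 :: P'') p1 y := isSimplePathFromTo_iff.2
        ⟨hPc.tail, hPn.of_cons, rfl, by rw [← hPl]; rfl⟩
      have hQt : G.IsSimplePathFromTo (p1 :: Q'') p1 y := isSimplePathFromTo_iff.2
        ⟨hQc.tail, hQn.of_cons, rfl, by rw [← hQl]; rfl⟩
      have := ih (p1 :: P'') (p1 :: Q'') p1 y (by simp at hlen ⊢; omega) hPt hQt
      rw [this]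
    · exfalso
      have hay : b ≠ y := by
        rintro rfl
        rw [List.getLast?_cons_cons] at hPl
        exact (List.nodup_cons.1 hPn).1 (List.mem_of_mem_getLast? hPl)
      obtain ⟨S, hS⟩ := exists_path hsc y b
      rw [isSimplePathFromTo_iff] at hS
      obtain ⟨hSc, hSn, hSh, hSl⟩ := hS
      have hS2 : 2 ≤ S.length := length_two_le hSh hSl (Ne.symm hay)
      obtain ⟨s, b', hs1, hs2, hs3⟩ := exists_last_arc S hS2
      have hb'b : b' = b := by rw [hSl] at hs2; exact (Option.some_inj.1 hs2).symm
      rw [hb'b] at hs3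
      have hadj_sa : G.Adj s b := adj_of_arcs hSc hs3
      have hanotin : b ∉ S.dropLast := not_mem_dropLast_of_getLast? hSn hSl
      have hdl_ne : S.dropLast ≠ [] := by
        intro h0; rw [h0] at hs1; simp at hs1
      have hdl_head : S.dropLast.head? = some y := by
        rw [head?_dropLast_of_two_le hS2, hSh]
      have hdl_chain : List.IsChain G.Adj S.dropLast := hSc.prefix (List.dropLast_prefix _)
      have hsa : s ≠ b := by
        rintro rfl
        exact hanotin (List.mem_of_mem_getLast? hs1)
      have main : ∀ (t1 : V) (T0 : List V), List.IsChain G.Adj (b :: t1 :: T0) →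
          (b :: t1 :: T0).Nodup → (b :: t1 :: T0).getLast? = some y →
          ∃ T, List.IsChain G.Adj T ∧ T.Nodup ∧ T.head? = some b ∧
            T.getLast? = some s ∧ (b, t1) ∈ arcs T := by
        intro t1 T0 hc hn hl
        have hjunc : (b :: t1 :: T0).getLast? = S.dropLast.head? := by
          rw [hl, hdl_head]
        have hWc : List.IsChain G.Adj ((b :: t1 :: T0) ++ S.dropLast.tail) :=
          chain'_append_tail hc hdl_chain hjunc
        have hWl : ((b :: t1 :: T0) ++ S.dropLast.tail).getLast? = some s := by
          rw [getLast?_append_tail (by simp) hjunc hdl_ne, hs1]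
        obtain ⟨T, h1, h2, h3, h4, h5, h6⟩ :=
          exists_nodup_chain'_of_chain' hWc (by simp)
        have hTh : T.head? = some b := by rw [h3]; rfl
        have hTl : T.getLast? = some s := h4.trans hWl
        have hT2 : 2 ≤ T.length := length_two_le hTh hTl (Ne.symm hsa)
        obtain ⟨a0, z, hz1, hz2, hz3⟩ := exists_first_arc hT2
        have ha0 : a0 = b := by
          rw [hTh] at hz1; exact Option.some_inj.1 hz1.symm
        subst ha0
        have hsplit : (a0, z) ∈ arcs (a0 :: t1 :: T0) ∨ (a0, z) ∈ arcs S.dropLast :=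
          (mem_arcs_append_iff hjunc).1 (h5 _ hz3)
        have hz_t1 : z = t1 := by
          rcases hsplit with hA | hB
          · have := arcs_src_of_nodup hn (by rfl) hA
            simpa using this.symm
          · exact absurd ((List.dropLast_sublist _).subset (mem_dropLast_of_arcs_src hB))
              hanotin
        subst hz_t1
        exact ⟨T, h1, h2, hTh, hTl, hz3⟩
      obtain ⟨T₁, hT₁c, hT₁n, hT₁h, hT₁l, hT₁arc⟩ := main p1 P'' hPc hPn hPl
      obtain ⟨T₂, hT₂c, hT₂n, hT₂h, hT₂l, hT₂arc⟩ := main q1 Q'' hQc hQn hQl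
      obtain ⟨hcyc₁, hmem₁, harcs₁⟩ := path_to_cycle hT₁c hT₁n hT₁h hT₁l hadj_sa
      obtain ⟨hcyc₂, hmem₂, harcs₂⟩ := path_to_cycle hT₂c hT₂n hT₂h hT₂l hadj_sa
      have hequiv := (hcac s b hadj_sa).2 _ _ hcyc₁ hmem₁ hcyc₂ hmem₂
      have h1 : (b, p1) ∈ arcs (T₁ ++ [b]) := (harcs₁ _).2 (Or.inl hT₁arc)
      have h2 : (b, p1) ∈ arcs (T₂ ++ [b]) := (hequiv _).1 h1
      have h3 : (b, q1) ∈ arcs (T₂ ++ [b]) := (harcs₂ _).2 (Or.inl hT₂arc)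
      exact hp1q1 (cycle_unique_out hcyc₂ h2 h3)

end Paths

section DsubDef

variable {G : DirGraph V}

lemma exists_in_arc_of_mem_tail {l : List V} {w : V} (hw : w ∈ l.tail) :
    ∃ a, (a, w) ∈ arcs l := by
  cases l with
  | nil => simp at hw
  | cons h t =>
    simp only [List.tail_cons] at hw
    obtain ⟨t₁, t₂, rfl⟩ := List.append_of_mem hw
    refine ⟨(h :: t₁).getLast (by simp), mem_arcs_iff.2 ⟨(h :: t₁).dropLast, t₂, ?_⟩⟩
    conv_lhs => rw [show h :: (t₁ ++ w :: t₂) = (h :: t₁) ++ (w :: t₂) by simp,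
      ← List.dropLast_append_getLast (l := h :: t₁) (by simp)]
    simp

lemma exists_out_arc_of_mem_dropLast {l : List V} {w : V} (hw : w ∈ l.dropLast) :
    ∃ z, (w, z) ∈ arcs l := by
  have hne : l ≠ [] := by rintro rfl; simp at hw
  obtain ⟨A, B, hAB⟩ := List.append_of_mem hw
  have hdec : l = A ++ w :: (B ++ [l.getLast hne]) := by
    conv_lhs => rw [← List.dropLast_append_getLast hne, hAB]
    simp
  obtain ⟨z, rest, hzr⟩ := List.exists_cons_of_ne_nil (l := B ++ [l.getLast hne]) (by simp)
  exact ⟨z, mem_arcs_iff.2 ⟨A, rest, by rw [hdec, hzr]⟩⟩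

lemma mem_dropLast_of_ne_getLast {l : List V} {x w : V} (hl : l.getLast? = some x)
    (hw : w ∈ l) (hne : w ≠ x) : w ∈ l.dropLast := by
  have hlne : l ≠ [] := by rintro rfl; simp at hl
  have hx : l.getLast hlne = x := by
    rw [List.getLast?_eq_getLast hlne] at hl; exact Option.some_inj.1 hl
  have := List.dropLast_append_getLast hlne
  rw [← this] at hw
  rcases List.mem_append.1 hw with h | h
  · exact h
  · simp only [List.mem_singleton] at h
    exact absurd (h.trans hx) hne

lemma mem_tail_of_ne_head {l : List V} {x w : V} (hl : l.head? = some x)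
    (hw : w ∈ l) (hne : w ≠ x) : w ∈ l.tail := by
  cases l with
  | nil => simp at hl
  | cons a t =>
    have : a = x := by simpa using hl
    subst this
    rcases List.mem_cons.1 hw with rfl | h
    · exact absurd rfl hne
    · exact h

lemma tail_getLast?_of_two_le {l : List V} (h : 2 ≤ l.length) :
    l.tail.getLast? = l.getLast? := by
  rw [List.getLast?_tail, if_neg (by omega)]

lemma isWalk_mono {G' : DirGraph V} (h : ∀ ⦃x y⦄, G'.Adj x y → G.Adj x y)
    {p : List V} (hp : G'.IsWalk p) : G.IsWalk p := by
  rw [isWalk_iff] at hp ⊢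
  exact ⟨hp.1, hp.2.imp h⟩

lemma cycle_mono {G' : DirGraph V} (h : ∀ ⦃x y⦄, G'.Adj x y → G.Adj x y)
    {Z : List V} (hZ : G'.IsSimpleCycle Z) : G.IsSimpleCycle Z :=
  ⟨isWalk_mono h hZ.1, hZ.2.1, hZ.2.2.1, hZ.2.2.2⟩

lemma Subgraph.ext' {H K : Subgraph G} (hv : H.verts = K.verts) (ha : H.Adj = K.Adj) :
    H = K := by
  cases H; cases K
  cases hv; cases ha
  rfl

/-- Walk data for a relation. -/
def ChainFromTo (D : V → V → Prop) (W : List V) (a b : V) : Prop :=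
  List.IsChain D W ∧ W.head? = some a ∧ W.getLast? = some b

lemma ChainFromTo.comp {D : V → V → Prop} {W₁ W₂ : List V} {a b d : V}
    (h1 : ChainFromTo D W₁ a b) (h2 : ChainFromTo D W₂ b d) :
    ChainFromTo D (W₁ ++ W₂.tail) a d := by
  obtain ⟨hc1, hh1, hl1⟩ := h1
  obtain ⟨hc2, hh2, hl2⟩ := h2
  have hne1 : W₁ ≠ [] := by rintro rfl; simp at hh1
  have hne2 : W₂ ≠ [] := by rintro rfl; simp at hh2
  have hjunc : W₁.getLast? = W₂.head? := by rw [hl1, hh2]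
  exact ⟨chain'_append_tail hc1 hc2 hjunc, by rw [head?_append_left hne1, hh1],
    by rw [getLast?_append_tail hne1 hjunc hne2, hl2]⟩

/-- The arc relation of the union of the cycles through the arcs of `P` and `Q`. -/
def DAdj (G : DirGraph V) (P Q : List V) (z w : V) : Prop :=
  ∃ u v Z, ((u, v) ∈ arcs P ∨ (u, v) ∈ arcs Q) ∧ G.IsSimpleCycle Z ∧
    (u, v) ∈ arcs Z ∧ (z, w) ∈ arcs Z

lemma dadj_adj {P Q : List V} {z w : V} (h : DAdj G P Q z w) : G.Adj z w := by
  obtain ⟨u, v, Z, -, hZ, -, hm⟩ := h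
  exact adj_of_arcs ((isWalk_iff G Z).1 hZ.1).2 hm

/-- The candidate minimum sub-cactus: union of the cycles through arcs of `P ∪ Q`. -/
def Dsub (G : DirGraph V) (P Q : List V) : Subgraph G where
  verts := {w | ∃ z, DAdj G P Q w z ∨ DAdj G P Q z w}
  Adj := DAdj G P Q
  adj_sub := fun _ _ h => dadj_adj h
  mem_left := fun x y h => ⟨y, Or.inl h⟩
  mem_right := fun x y h => ⟨x, Or.inr h⟩

end DsubDef

section Context

variable {G : DirGraph V} {r c : V} {P Q : List V}

lemma arcs_P_dadj (hG : G.IsCactus) (hPc : List.IsChain G.Adj P) {z w : V}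
    (h : (z, w) ∈ arcs P) : DAdj G P Q z w := by
  obtain ⟨Z, hZ, hm⟩ := (hG.2 z w (adj_of_arcs hPc h)).1
  exact ⟨z, w, Z, Or.inl h, hZ, hm, hm⟩

lemma arcs_Q_dadj (hG : G.IsCactus) (hQc : List.IsChain G.Adj Q) {z w : V}
    (h : (z, w) ∈ arcs Q) : DAdj G P Q z w := by
  obtain ⟨Z, hZ, hm⟩ := (hG.2 z w (adj_of_arcs hQc h)).1
  exact ⟨z, w, Z, Or.inr h, hZ, hm, hm⟩

lemma two_le_length_of_arcs {l : List V} {z w : V} (h : (z, w) ∈ arcs l) :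
    2 ≤ l.length := by
  obtain ⟨l₁, l₂, rfl⟩ := mem_arcs_iff.1 h
  simp only [List.length_append, List.length_cons]
  omega

/-- If a cycle contains the last arc of `P`, it contains the first arc of `Q`. -/
lemma EF1 (hG : G.IsCactus) (hP : G.IsSimplePathFromTo P r c)
    (hQ : G.IsSimplePathFromTo Q c r) {p q : V}
    (hpP : (p, c) ∈ arcs P) (hqQ : (c, q) ∈ arcs Q)
    {Z : List V} (hZ : G.IsSimpleCycle Z) (he : (p, c) ∈ arcs Z) :
    (c, q) ∈ arcs Z := by
  rw [isSimplePathFromTo_iff] at hP hQ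
  obtain ⟨hPc, hPn, hPh, hPl⟩ := hP
  obtain ⟨hQc, hQn, hQh, hQl⟩ := hQ
  obtain ⟨S, hSc, hSn, hSh, hSl, hSa⟩ := cycle_to_path hZ he
  -- S : simple path c → p with arcs in Z
  have hpdl : P.dropLast.getLast? = some p := arcs_tgt_of_nodup hPn hPl hpP
  have hPdlne : P.dropLast ≠ [] := by rintro h0; rw [h0] at hpdl; simp at hpdl
  have hP2 : 2 ≤ P.length := two_le_length_of_arcs hpP
  have hPdh : P.dropLast.head? = some r := by rw [head?_dropLast_of_two_le hP2, hPh]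
  have hW : ChainFromTo G.Adj (Q ++ P.dropLast.tail) c p :=
    ChainFromTo.comp ⟨hQc, hQh, hQl⟩ ⟨hPc.prefix (List.dropLast_prefix _), hPdh, hpdl⟩
  obtain ⟨T, hT1, hT2, hT3, hT4, hT5, -⟩ :=
    exists_nodup_chain'_of_chain' hW.1
      (by rintro h0; rw [h0] at hW; exact absurd hW.2.1 (by simp))
  have hTpath : G.IsSimplePathFromTo T c p :=
    isSimplePathFromTo_iff.2 ⟨hT1, hT2, hT3.trans hW.2.1, hT4.trans hW.2.2⟩
  have hSpath : G.IsSimplePathFromTo S c p := isSimplePathFromTo_iff.2 ⟨hSc, hSn, hSh, hSl⟩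
  have hTS : T = S := path_unique hG.2 hG.1 hTpath hSpath
  have hpc : p ≠ c := by
    rintro rfl; exact G.loopless p (adj_of_arcs hPc hpP)
  have hT2le : 2 ≤ T.length := length_two_le hTpath.2.1 hTpath.2.2 (Ne.symm hpc)
  obtain ⟨c0, z, hz1, hz2, hz3⟩ := exists_first_arc hT2le
  have hc0 : c0 = c := by
    rw [hTpath.2.1] at hz1; exact (Option.some_inj.1 hz1).symm
  rw [hc0] at hz3
  have hsplit : (c, z) ∈ arcs Q ∨ (c, z) ∈ arcs P.dropLast := by
    have hjunc : Q.getLast? = P.dropLast.head? := by rw [hQl, hPdh]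
    exact (mem_arcs_append_iff hjunc).1 (hT5 _ hz3)
  have hzq : z = q := by
    rcases hsplit with hA | hB
    · have h1 := arcs_src_of_nodup hQn hQh hA
      have h2 := arcs_src_of_nodup hQn hQh hqQ
      rw [h1] at h2
      exact Option.some_inj.1 h2
    · exfalso
      have hcm : c ∈ P.dropLast.dropLast := mem_dropLast_of_arcs_src hB
      exact not_mem_dropLast_of_getLast? hPn hPl ((List.dropLast_sublist _).subset hcm)
  rw [hzq] at hz3
  exact hSa _ (hTS ▸ hz3)

/-- If a cycle contains the first arc of `Q`, it contains the last arc of `P`. -/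
lemma EF2 (hG : G.IsCactus) (hP : G.IsSimplePathFromTo P r c)
    (hQ : G.IsSimplePathFromTo Q c r) {p q : V}
    (hpP : (p, c) ∈ arcs P) (hqQ : (c, q) ∈ arcs Q)
    {Z : List V} (hZ : G.IsSimpleCycle Z) (hf : (c, q) ∈ arcs Z) :
    (p, c) ∈ arcs Z := by
  rw [isSimplePathFromTo_iff] at hP hQ
  obtain ⟨hPc, hPn, hPh, hPl⟩ := hP
  obtain ⟨hQc, hQn, hQh, hQl⟩ := hQ
  obtain ⟨S, hSc, hSn, hSh, hSl, hSa⟩ := cycle_to_path hZ hf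
  -- S : simple path q → c with arcs in Z
  have hqth : Q.tail.head? = some q := arcs_src_of_nodup hQn hQh hqQ
  have hQtne : Q.tail ≠ [] := by rintro h0; rw [h0] at hqth; simp at hqth
  have hcq_adj : G.Adj c q := adj_of_arcs hQc hqQ
  have hcq : c ≠ q := by rintro rfl; exact G.loopless c hcq_adj
  have hQ2 : 2 ≤ Q.length := by
    cases Q with
    | nil => simp at hQh
    | cons a t =>
      cases t with
      | nil => simp at hQtne
      | cons b t' => simp
  have hQtl : Q.tail.getLast? = some r := by rw [tail_getLast?_of_two_le hQ2, hQl]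
  have hW : ChainFromTo G.Adj (Q.tail ++ P.tail) q c :=
    ChainFromTo.comp ⟨hQc.tail, hqth, hQtl⟩ ⟨hPc, hPh, hPl⟩
  obtain ⟨T, hT1, hT2, hT3, hT4, hT5, -⟩ :=
    exists_nodup_chain'_of_chain' hW.1
      (by rintro h0; rw [h0] at hW; exact absurd hW.2.1 (by simp))
  have hTpath : G.IsSimplePathFromTo T q c :=
    isSimplePathFromTo_iff.2 ⟨hT1, hT2, hT3.trans hW.2.1, hT4.trans hW.2.2⟩
  have hSpath : G.IsSimplePathFromTo S q c := isSimplePathFromTo_iff.2 ⟨hSc, hSn, hSh, hSl⟩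
  have hTS : T = S := path_unique hG.2 hG.1 hTpath hSpath
  have hT2le : 2 ≤ T.length := length_two_le hTpath.2.1 hTpath.2.2 (Ne.symm hcq)
  obtain ⟨a', c', ha1, ha2, ha3⟩ := exists_last_arc T hT2le
  have hc' : c' = c := by
    rw [hTpath.2.2] at ha2; exact (Option.some_inj.1 ha2).symm
  rw [hc'] at ha3
  have hjunc : Q.tail.getLast? = P.head? := by rw [hQtl, hPh]
  have hsplit : (a', c) ∈ arcs Q.tail ∨ (a', c) ∈ arcs P :=
    (mem_arcs_append_iff hjunc).1 (hT5 _ ha3)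
  have hcQt : c ∉ Q.tail := by
    cases Q with
    | nil => simp at hQh
    | cons a t =>
      have ha : a = c := by simpa using hQh
      rw [ha] at hQn
      exact (List.nodup_cons.1 hQn).1
  have hap : a' = p := by
    rcases hsplit with hA | hB
    · exact absurd ((List.tail_sublist _).subset (mem_tail_of_arcs_tgt hA)) hcQt
    · have h1 := arcs_tgt_of_nodup hPn hPl hB
      have h2 := arcs_tgt_of_nodup hPn hPl hpP
      rw [h1] at h2
      exact Option.some_inj.1 h2
  rw [hap] at ha3
  exact hSa _ (hTS ▸ ha3)

/-- Any `Dsub`-arc into `c` comes from `p`, the predecessor of `c` on `P`. -/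
lemma dadj_into_c (hG : G.IsCactus) (hP : G.IsSimplePathFromTo P r c)
    (hQ : G.IsSimplePathFromTo Q c r) {p q : V}
    (hpP : (p, c) ∈ arcs P) (hqQ : (c, q) ∈ arcs Q)
    {x : V} (hD : DAdj G P Q x c) : x = p := by
  obtain ⟨u, v, Z, hb, hZ, hbZ, hxc⟩ := hD
  have hP' := hP
  have hQ' := hQ
  rw [isSimplePathFromTo_iff] at hP' hQ'
  obtain ⟨hPc, hPn, hPh, hPl⟩ := hP'
  obtain ⟨hQc, hQn, hQh, hQl⟩ := hQ'
  suffices hpcZ : (p, c) ∈ arcs Z from cycle_unique_in hZ hxc hpcZ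
  rcases hb with hbP | hbQ
  · -- b on P
    by_cases hvc : v = c
    · rw [hvc] at hbP hbZ
      have h1 := arcs_tgt_of_nodup hPn hPl hbP
      have h2 := arcs_tgt_of_nodup hPn hPl hpP
      rw [h1] at h2
      rw [show p = u from (Option.some_inj.1 h2).symm]
      exact hbZ
    · -- two paths v → c
      obtain ⟨cy, hcy⟩ := cycle_out_of_in hZ hxc
      obtain ⟨S₂, hS2c, hS2n, hS2h, hS2l, hS2a⟩ := cycle_path_between hZ hbZ hcy
      -- S₂ : v → c along Z
      obtain ⟨l₁, l₂, hPd⟩ := mem_arcs_iff.1 hbP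
      have hsuff : (v :: l₂) <:+ P := ⟨l₁ ++ [u], by rw [hPd]; simp⟩
      have hS1path : G.IsSimplePathFromTo (v :: l₂) v c := by
        refine isSimplePathFromTo_iff.2 ⟨hPc.suffix hsuff, hPn.sublist hsuff.sublist, rfl, ?_⟩
        rw [← hPl, hPd, show l₁ ++ u :: v :: l₂ = (l₁ ++ [u]) ++ (v :: l₂) by simp]
        exact (getLast?_append_right (by simp)).symm
      have hS2path : G.IsSimplePathFromTo S₂ v c :=
        isSimplePathFromTo_iff.2 ⟨hS2c, hS2n, hS2h, hS2l⟩
      have hSS : (v :: l₂) = S₂ := path_unique hG.2 hG.1 hS1path hS2path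
      have h2le : 2 ≤ (v :: l₂).length :=
        length_two_le hS1path.2.1 hS1path.2.2 hvc
      obtain ⟨a', c', ha1, ha2, ha3⟩ := exists_last_arc _ h2le
      have hc' : c' = c := by
        rw [hS1path.2.2] at ha2; exact (Option.some_inj.1 ha2).symm
      rw [hc'] at ha3
      have ha'P : (a', c) ∈ arcs P := arcs_subset_of_infix hsuff.isInfix ha3
      have hap : a' = p := by
        have h1 := arcs_tgt_of_nodup hPn hPl ha'P
        have h2 := arcs_tgt_of_nodup hPn hPl hpP
        rw [h1] at h2
        exact Option.some_inj.1 h2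
      rw [hap] at ha3
      exact hS2a _ (hSS ▸ ha3)
  · -- b on Q : show (c, q) ∈ arcs Z, then use EF2
    refine EF2 hG hP hQ hpP hqQ hZ ?_
    by_cases huc : u = c
    · rw [huc] at hbQ hbZ
      have h1 := arcs_src_of_nodup hQn hQh hbQ
      have h2 := arcs_src_of_nodup hQn hQh hqQ
      rw [h1] at h2
      rw [show q = v from (Option.some_inj.1 h2).symm]
      exact hbZ
    · -- two paths c → u
      obtain ⟨S₂, hS2c, hS2n, hS2h, hS2l, hS2a⟩ := cycle_path_between hZ hxc hbZ
      -- S₂ : c → u along Z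
      obtain ⟨m₁, m₂, hQd⟩ := mem_arcs_iff.1 hbQ
      have hpre : (m₁ ++ [u]) <+: Q := ⟨v :: m₂, by rw [hQd]; simp⟩
      have hS1path : G.IsSimplePathFromTo (m₁ ++ [u]) c u := by
        refine isSimplePathFromTo_iff.2 ⟨hQc.prefix hpre, hQn.sublist hpre.sublist, ?_,
          List.getLast?_concat⟩
        rw [← hQh, hQd, show m₁ ++ u :: v :: m₂ = (m₁ ++ [u]) ++ (v :: m₂) by simp]
        exact (head?_append_left (by simp)).symm
      have hS2path : G.IsSimplePathFromTo S₂ c u :=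
        isSimplePathFromTo_iff.2 ⟨hS2c, hS2n, hS2h, hS2l⟩
      have hSS : (m₁ ++ [u]) = S₂ := path_unique hG.2 hG.1 hS1path hS2path
      have h2le : 2 ≤ (m₁ ++ [u]).length :=
        length_two_le hS1path.2.1 hS1path.2.2 (fun h => huc h.symm)
      obtain ⟨c0, z, hz1, hz2, hz3⟩ := exists_first_arc h2le
      have hc0 : c0 = c := by
        rw [hS1path.2.1] at hz1; exact (Option.some_inj.1 hz1).symm
      rw [hc0] at hz3
      have hzQ : (c, z) ∈ arcs Q := arcs_subset_of_infix hpre.isInfix hz3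
      have hzq : z = q := by
        have h1 := arcs_src_of_nodup hQn hQh hzQ
        have h2 := arcs_src_of_nodup hQn hQh hqQ
        rw [h1] at h2
        exact Option.some_inj.1 h2
      rw [hzq] at hz3
      exact hS2a _ (hSS ▸ hz3)

/-- Any `Dsub`-arc out of `c` goes to `q`, the successor of `c` on `Q`. -/
lemma dadj_outof_c (hG : G.IsCactus) (hP : G.IsSimplePathFromTo P r c)
    (hQ : G.IsSimplePathFromTo Q c r) {p q : V}
    (hpP : (p, c) ∈ arcs P) (hqQ : (c, q) ∈ arcs Q)
    {y : V} (hD : DAdj G P Q c y) : y = q := by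
  obtain ⟨u, v, Z, hb, hZ, hbZ, hcy⟩ := hD
  have hP' := hP
  have hQ' := hQ
  rw [isSimplePathFromTo_iff] at hP' hQ'
  obtain ⟨hPc, hPn, hPh, hPl⟩ := hP'
  obtain ⟨hQc, hQn, hQh, hQl⟩ := hQ'
  suffices hcqZ : (c, q) ∈ arcs Z from cycle_unique_out hZ hcy hcqZ
  rcases hb with hbP | hbQ
  · -- b on P : show (p, c) ∈ arcs Z, then EF1
    refine EF1 hG hP hQ hpP hqQ hZ ?_
    by_cases hvc : v = c
    · rw [hvc] at hbP hbZ
      have h1 := arcs_tgt_of_nodup hPn hPl hbP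
      have h2 := arcs_tgt_of_nodup hPn hPl hpP
      rw [h1] at h2
      rw [show p = u from (Option.some_inj.1 h2).symm]
      exact hbZ
    · obtain ⟨S₂, hS2c, hS2n, hS2h, hS2l, hS2a⟩ := cycle_path_between hZ hbZ hcy
      obtain ⟨l₁, l₂, hPd⟩ := mem_arcs_iff.1 hbP
      have hsuff : (v :: l₂) <:+ P := ⟨l₁ ++ [u], by rw [hPd]; simp⟩
      have hS1path : G.IsSimplePathFromTo (v :: l₂) v c := by
        refine isSimplePathFromTo_iff.2 ⟨hPc.suffix hsuff, hPn.sublist hsuff.sublist, rfl, ?_⟩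
        rw [← hPl, hPd, show l₁ ++ u :: v :: l₂ = (l₁ ++ [u]) ++ (v :: l₂) by simp]
        exact (getLast?_append_right (by simp)).symm
      have hS2path : G.IsSimplePathFromTo S₂ v c :=
        isSimplePathFromTo_iff.2 ⟨hS2c, hS2n, hS2h, hS2l⟩
      have hSS : (v :: l₂) = S₂ := path_unique hG.2 hG.1 hS1path hS2path
      have h2le : 2 ≤ (v :: l₂).length := length_two_le hS1path.2.1 hS1path.2.2 hvc
      obtain ⟨a', c', ha1, ha2, ha3⟩ := exists_last_arc _ h2le
      have hc' : c' = c := by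
        rw [hS1path.2.2] at ha2; exact (Option.some_inj.1 ha2).symm
      rw [hc'] at ha3
      have ha'P : (a', c) ∈ arcs P := arcs_subset_of_infix hsuff.isInfix ha3
      have hap : a' = p := by
        have h1 := arcs_tgt_of_nodup hPn hPl ha'P
        have h2 := arcs_tgt_of_nodup hPn hPl hpP
        rw [h1] at h2
        exact Option.some_inj.1 h2
      rw [hap] at ha3
      exact hS2a _ (hSS ▸ ha3)
  · by_cases huc : u = c
    · rw [huc] at hbQ hbZ
      have h1 := arcs_src_of_nodup hQn hQh hbQ
      have h2 := arcs_src_of_nodup hQn hQh hqQ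
      rw [h1] at h2
      rw [show q = v from (Option.some_inj.1 h2).symm]
      exact hbZ
    · obtain ⟨x0, hx0⟩ := cycle_in_of_out hZ hcy
      obtain ⟨S₂, hS2c, hS2n, hS2h, hS2l, hS2a⟩ := cycle_path_between hZ hx0 hbZ
      obtain ⟨m₁, m₂, hQd⟩ := mem_arcs_iff.1 hbQ
      have hpre : (m₁ ++ [u]) <+: Q := ⟨v :: m₂, by rw [hQd]; simp⟩
      have hS1path : G.IsSimplePathFromTo (m₁ ++ [u]) c u := by
        refine isSimplePathFromTo_iff.2 ⟨hQc.prefix hpre, hQn.sublist hpre.sublist, ?_,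
          List.getLast?_concat⟩
        rw [← hQh, hQd, show m₁ ++ u :: v :: m₂ = (m₁ ++ [u]) ++ (v :: m₂) by simp]
        exact (head?_append_left (by simp)).symm
      have hS2path : G.IsSimplePathFromTo S₂ c u :=
        isSimplePathFromTo_iff.2 ⟨hS2c, hS2n, hS2h, hS2l⟩
      have hSS : (m₁ ++ [u]) = S₂ := path_unique hG.2 hG.1 hS1path hS2path
      have h2le : 2 ≤ (m₁ ++ [u]).length :=
        length_two_le hS1path.2.1 hS1path.2.2 (fun h => huc h.symm)
      obtain ⟨c0, z, hz1, hz2, hz3⟩ := exists_first_arc h2le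
      have hc0 : c0 = c := by
        rw [hS1path.2.1] at hz1; exact (Option.some_inj.1 hz1).symm
      rw [hc0] at hz3
      have hzQ : (c, z) ∈ arcs Q := arcs_subset_of_infix hpre.isInfix hz3
      have hzq : z = q := by
        have h1 := arcs_src_of_nodup hQn hQh hzQ
        have h2 := arcs_src_of_nodup hQn hQh hqQ
        rw [h1] at h2
        exact Option.some_inj.1 h2
      rw [hzq] at hz3
      exact hS2a _ (hSS ▸ hz3)

end Context

section Cactusness

variable {G : DirGraph V} {r c : V} {P Q : List V}

lemma Dsub_isCactus (hG : G.IsCactus) (hc : c ≠ r)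
    (hP : G.IsSimplePathFromTo P r c) (hQ : G.IsSimplePathFromTo Q c r) :
    (Dsub G P Q).IsCactus ∧ r ∈ (Dsub G P Q).verts ∧ c ∈ (Dsub G P Q).verts := by
  have hP' := hP
  have hQ' := hQ
  rw [isSimplePathFromTo_iff] at hP' hQ'
  obtain ⟨hPc, hPn, hPh, hPl⟩ := hP'
  obtain ⟨hQc, hQn, hQh, hQl⟩ := hQ'
  have hP2 : 2 ≤ P.length := length_two_le hPh hPl (fun h => hc h.symm)
  have hQ2 : 2 ≤ Q.length := length_two_le hQh hQl hc
  have hPD : List.IsChain (DAdj G P Q) P :=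
    chain'_iff_arcs.2 fun z w h => arcs_P_dadj hG hPc h
  have hQD : List.IsChain (DAdj G P Q) Q :=
    chain'_iff_arcs.2 fun z w h => arcs_Q_dadj hG hQc h
  have hrmem : r ∈ (Dsub G P Q).verts := by
    obtain ⟨r0, z0, h1, h2, h3⟩ := exists_first_arc hP2
    have : r0 = r := by rw [hPh] at h1; exact (Option.some_inj.1 h1).symm
    rw [this] at h3
    exact ⟨z0, Or.inl (arcs_P_dadj hG hPc h3)⟩
  have hcmem : c ∈ (Dsub G P Q).verts := by
    obtain ⟨p0, c0, h1, h2, h3⟩ := exists_last_arc P hP2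
    have : c0 = c := by rw [hPl] at h2; exact (Option.some_inj.1 h2).symm
    rw [this] at h3
    exact ⟨p0, Or.inr (arcs_P_dadj hG hPc h3)⟩
  -- walks from r and to r for endpoints of arcs of P ∪ Q
  have SCb : ∀ u v : V, ((u, v) ∈ arcs P ∨ (u, v) ∈ arcs Q) →
      (∃ W, ChainFromTo (DAdj G P Q) W r v) ∧
      (∃ W, ChainFromTo (DAdj G P Q) W u r) := by
    intro u v hb
    rcases hb with hbP | hbQ
    · obtain ⟨l₁, l₂, hPd⟩ := mem_arcs_iff.1 hbP
      constructor
      · refine ⟨l₁ ++ [u, v], hPD.prefix ⟨l₂, by rw [hPd]; simp⟩, ?_, ?_⟩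
        · rw [hPd, show l₁ ++ u :: v :: l₂ = (l₁ ++ [u, v]) ++ l₂ by simp,
            head?_append_left (by simp)] at hPh
          exact hPh
        · rw [show l₁ ++ [u, v] = (l₁ ++ [u]) ++ [v] by simp, List.getLast?_concat]
      · have hsuf : (u :: v :: l₂) <:+ P := ⟨l₁, by rw [hPd]⟩
        have hlast : (u :: v :: l₂).getLast? = some c := by
          rw [← hPl, hPd]
          exact (getLast?_append_right (by simp)).symm
        exact ⟨_, ChainFromTo.comp (W₁ := u :: v :: l₂)
          ⟨hPD.suffix hsuf, rfl, hlast⟩ ⟨hQD, hQh, hQl⟩⟩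
    · obtain ⟨m₁, m₂, hQd⟩ := mem_arcs_iff.1 hbQ
      constructor
      · have hhead : (m₁ ++ [u, v]).head? = some c := by
          rw [hQd, show m₁ ++ u :: v :: m₂ = (m₁ ++ [u, v]) ++ m₂ by simp,
            head?_append_left (by simp)] at hQh
          exact hQh
        have hlast : (m₁ ++ [u, v]).getLast? = some v := by
          rw [show m₁ ++ [u, v] = (m₁ ++ [u]) ++ [v] by simp, List.getLast?_concat]
        exact ⟨_, ChainFromTo.comp ⟨hPD, hPh, hPl⟩
          ⟨hQD.prefix ⟨m₂, by rw [hQd]; simp⟩, hhead, hlast⟩⟩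
      · have hsuf : (u :: v :: m₂) <:+ Q := ⟨m₁, by rw [hQd]⟩
        have hlast : (u :: v :: m₂).getLast? = some r := by
          rw [← hQl, hQd]
          exact (getLast?_append_right (by simp)).symm
        exact ⟨u :: v :: m₂, hQD.suffix hsuf, rfl, hlast⟩
  -- walks between r and any vertex of Dsub
  have SCx : ∀ x ∈ (Dsub G P Q).verts,
      (∃ W, ChainFromTo (DAdj G P Q) W x r) ∧
      (∃ W, ChainFromTo (DAdj G P Q) W r x) := by
    rintro x ⟨z, hz⟩
    have key : ∀ u v (Z : List V), ((u, v) ∈ arcs P ∨ (u, v) ∈ arcs Q) →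
        G.IsSimpleCycle Z → (u, v) ∈ arcs Z →
        ((x, z) ∈ arcs Z ∨ (z, x) ∈ arcs Z) →
        (∃ W, ChainFromTo (DAdj G P Q) W x r) ∧
        (∃ W, ChainFromTo (DAdj G P Q) W r x) := by
      intro u v Z hb hZ hbZ hm
      have hZD : ∀ z' w' : V, (z', w') ∈ arcs Z → DAdj G P Q z' w' :=
        fun z' w' h => ⟨u, v, Z, hb, hZ, hbZ, h⟩
      obtain ⟨a, ha⟩ : ∃ a, (a, x) ∈ arcs Z := by
        rcases hm with h | h
        · exact cycle_in_of_out hZ h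
        · exact ⟨z, h⟩
      obtain ⟨y', hy'⟩ : ∃ y', (x, y') ∈ arcs Z := by
        rcases hm with h | h
        · exact ⟨z, h⟩
        · exact cycle_out_of_in hZ h
      constructor
      · obtain ⟨S, hSc, hSn, hSh, hSl, hSa⟩ := cycle_path_between hZ ha hbZ
        obtain ⟨W2, hW2⟩ := (SCb u v hb).2
        exact ⟨_, ChainFromTo.comp
          ⟨chain'_iff_arcs.2 fun z' w' h => hZD z' w' (hSa _ h), hSh, hSl⟩ hW2⟩
      · obtain ⟨S, hSc, hSn, hSh, hSl, hSa⟩ := cycle_path_between hZ hbZ hy'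
        obtain ⟨W1, hW1⟩ := (SCb u v hb).1
        exact ⟨_, ChainFromTo.comp hW1
          ⟨chain'_iff_arcs.2 fun z' w' h => hZD z' w' (hSa _ h), hSh, hSl⟩⟩
    rcases hz with h | h
    · obtain ⟨u, v, Z, hb, hZ, hbZ, hm⟩ := h
      exact key u v Z hb hZ hbZ (Or.inl hm)
    · obtain ⟨u, v, Z, hb, hZ, hbZ, hm⟩ := h
      exact key u v Z hb hZ hbZ (Or.inr hm)
  refine ⟨⟨⟨r, hrmem⟩, ?_, ?_⟩, hrmem, hcmem⟩
  · -- strong connectivity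
    intro x hx y hy
    obtain ⟨W1, hW1⟩ := (SCx x hx).1
    obtain ⟨W2, hW2⟩ := (SCx y hy).2
    have hW := ChainFromTo.comp hW1 hW2
    refine ⟨W1 ++ W2.tail, ?_, hW.2.1, hW.2.2⟩
    rw [isWalk_iff]
    exact ⟨by rintro h0; rw [h0] at hW; exact absurd hW.2.1 (by simp), hW.1⟩
  · -- cactus arc condition
    intro z w hzw
    obtain ⟨u, v, Z, hb, hZ, hbZ, hm⟩ := hzw
    constructor
    · refine ⟨Z, ⟨?_, hZ.2.1, hZ.2.2.1, hZ.2.2.2⟩, hm⟩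
      rw [isWalk_iff]
      refine ⟨by rintro rfl; simp at hm, ?_⟩
      exact chain'_iff_arcs.2 fun z' w' h => ⟨u, v, Z, hb, hZ, hbZ, h⟩
    · intro p' q' hp' hmp hq' hmq
      have hadj : G.Adj z w := dadj_adj ⟨u, v, Z, hb, hZ, hbZ, hm⟩
      exact (hG.2 z w hadj).2 p' q'
        (cycle_mono (fun _ _ h => dadj_adj h) hp') hmp
        (cycle_mono (fun _ _ h => dadj_adj h) hq') hmq

lemma Dsub_le (hG : G.IsCactus)
    (hP : G.IsSimplePathFromTo P r c) (hQ : G.IsSimplePathFromTo Q c r)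
    (H : Subgraph G) (hH : H.IsCactus) (hr : r ∈ H.verts) (hc' : c ∈ H.verts) :
    (Dsub G P Q).verts ⊆ H.verts ∧ ∀ ⦃z w⦄, DAdj G P Q z w → H.Adj z w := by
  have harcsP : ∀ {z w : V}, (z, w) ∈ arcs P → H.Adj z w := by
    obtain ⟨p', hp'⟩ := hH.2.1 r hr c hc'
    obtain ⟨T, hT, -, -⟩ := exists_path_of_walkFromTo hp'
    have hT' := isSimplePathFromTo_iff.1 hT
    have hTg : G.IsSimplePathFromTo T r c :=
      isSimplePathFromTo_iff.2 ⟨hT'.1.imp (fun a b h => H.adj_sub h), hT'.2.1, hT'.2.2.1, hT'.2.2.2⟩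
    have hTP : T = P := path_unique hG.2 hG.1 hTg hP
    intro z w h
    exact adj_of_arcs hT'.1 (hTP ▸ h)
  have harcsQ : ∀ {z w : V}, (z, w) ∈ arcs Q → H.Adj z w := by
    obtain ⟨p', hp'⟩ := hH.2.1 c hc' r hr
    obtain ⟨T, hT, -, -⟩ := exists_path_of_walkFromTo hp'
    have hT' := isSimplePathFromTo_iff.1 hT
    have hTg : G.IsSimplePathFromTo T c r :=
      isSimplePathFromTo_iff.2 ⟨hT'.1.imp (fun a b h => H.adj_sub h), hT'.2.1, hT'.2.2.1, hT'.2.2.2⟩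
    have hTQ : T = Q := path_unique hG.2 hG.1 hTg hQ
    intro z w h
    exact adj_of_arcs hT'.1 (hTQ ▸ h)
  have hDa : ∀ ⦃z w : V⦄, DAdj G P Q z w → H.Adj z w := by
    intro z w hzw
    obtain ⟨u, v, Z, hb, hZ, hbZ, hm⟩ := hzw
    have hbH : H.Adj u v := by
      rcases hb with h | h
      · exact harcsP h
      · exact harcsQ h
    obtain ⟨Z_H, hZH, hmH⟩ := (hH.2.2 u v hbH).1
    have hZHg : G.IsSimpleCycle Z_H := cycle_mono (fun _ _ h => H.adj_sub h) hZH
    have hequiv := (hG.2 u v (H.adj_sub hbH)).2 Z_H Z hZHg hmH hZ hbZ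
    have hmZH : (z, w) ∈ arcs Z_H := (hequiv (z, w)).2 hm
    exact adj_of_arcs ((isWalk_iff _ Z_H).1 hZH.1).2 hmZH
  refine ⟨?_, hDa⟩
  rintro x ⟨z, h | h⟩
  · exact H.mem_left (hDa h)
  · exact H.mem_right (hDa h)

lemma C_eq_Dsub (hG : G.IsCactus) (hc : c ≠ r)
    (hP : G.IsSimplePathFromTo P r c) (hQ : G.IsSimplePathFromTo Q c r) :
    C G r c = Dsub G P Q := by
  obtain ⟨hD, hDr, hDc⟩ := Dsub_isCactus hG hc hP hQ
  have hsub : ∀ H : Subgraph G, H.IsCactus → ({r, c} : Set V) ⊆ H.verts →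
      (Dsub G P Q).verts ⊆ H.verts ∧ ∀ ⦃z w⦄, DAdj G P Q z w → H.Adj z w := by
    intro H hH hs
    exact Dsub_le hG hP hQ H hH (hs (by simp)) (hs (by simp))
  have hDsubmem : ({r, c} : Set V) ⊆ (Dsub G P Q).verts := by
    rintro t (rfl | rfl)
    · exact hDr
    · exact hDc
  rw [C, if_neg hc]
  refine Subgraph.ext' ?_ ?_
  · ext x
    constructor
    · intro hx
      exact hx (Dsub G P Q) hD hDsubmem
    · intro hx H hH hs
      exact (hsub H hH hs).1 hx
  · funext z w
    apply propext
    constructor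
    · intro h
      exact h.2 (Dsub G P Q) hD hDsubmem
    · intro h
      exact ⟨dadj_adj h, fun H hH hs => (hsub H hH hs).2 h⟩

lemma pre_of_mem {v w : V} (hw : w ≠ r) (hCw : (C G r w).IsCactus)
    (hrw : r ∈ (C G r w).verts) (hv : v ∈ (C G r w).verts) : pre G r v w := by
  unfold pre Subgraph.le
  by_cases hvr : v = r
  · subst hvr
    rw [C, if_pos rfl]
    constructor
    · intro z hz
      have hz' : z = v := hz
      subst hz'
      exact hrw
    · intro a b h
      exact h.elim
  · rw [C, if_neg hvr]
    have hmem : ({r, v} : Set V) ⊆ (C G r w).verts := by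
      rintro t (rfl | rfl)
      · exact hrw
      · exact hv
    exact ⟨fun z hz => hz _ hCw hmem, fun a b h => h.2 _ hCw hmem⟩

end Cactusness





end DirGraph

open DirGraph in
/-- For a connecting point `c ≠ r` of a rooted cactus digraph with
`δ⁻(c) = δ⁺(c) = n ≥ 2`, the subgraph `C(c)` contains exactly one incoming
and one outgoing arc of `c`; for the sources/targets `x`, `y` of these arcs
`x ≼ c` and `y ≼ c`, while `c ≺ x'` and `c ≺ y'` for all other in-neighbours
`x'` and out-neighbours `y'`. -/
theorem connectingPoint_arcs_in_C {V : Type} [Finite V] (G : DirGraph V)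
    (r c : V) (hG : G.IsCactus) (hc : c ≠ r) (hcp : G.IsConnectingPoint c)
    (n : ℕ) (hn : 2 ≤ n) (hin : G.inDeg c = n) (hout : G.outDeg c = n) :
    (∃! x, (C G r c).Adj x c) ∧ (∃! y, (C G r c).Adj c y) ∧
    (∀ x, G.Adj x c →
      ((C G r c).Adj x c → pre G r x c) ∧
      (¬ (C G r c).Adj x c → pre G r c x ∧ ¬ pre G r x c)) ∧
    (∀ y, G.Adj c y →
      ((C G r c).Adj c y → pre G r y c) ∧
      (¬ (C G r c).Adj c y → pre G r c y ∧ ¬ pre G r y c)) := by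
  classical
  obtain ⟨P, hP⟩ := exists_path hG.1 r c
  obtain ⟨Q, hQ⟩ := exists_path hG.1 c r
  have hP' := isSimplePathFromTo_iff.1 hP
  obtain ⟨hPc, hPn, hPh, hPl⟩ := hP'
  have hQ' := isSimplePathFromTo_iff.1 hQ
  obtain ⟨hQc, hQn, hQh, hQl⟩ := hQ'
  have hP2 : 2 ≤ P.length := length_two_le hPh hPl (fun h => hc h.symm)
  have hQ2 : 2 ≤ Q.length := length_two_le hQh hQl hc
  obtain ⟨p, c0, hp1, hp2, hp3⟩ := exists_last_arc P hP2
  have hc0 : c0 = c := by rw [hPl] at hp2; exact (Option.some_inj.1 hp2).symm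
  rw [hc0] at hp3
  obtain ⟨c1, q, hq1, hq2, hq3⟩ := exists_first_arc hQ2
  have hc1 : c1 = c := by rw [hQh] at hq1; exact (Option.some_inj.1 hq1).symm
  rw [hc1] at hq3
  have hC : C G r c = Dsub G P Q := C_eq_Dsub hG hc hP hQ
  obtain ⟨hDcac, hDr, hDc⟩ := Dsub_isCactus hG hc hP hQ
  have hdpc : DAdj G P Q p c := arcs_P_dadj hG hPc hp3
  have hdcq : DAdj G P Q c q := arcs_Q_dadj hG hQc hq3
  have hCcact : (C G r c).IsCactus := by rw [hC]; exact hDcac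
  have hCr : r ∈ (C G r c).verts := by rw [hC]; exact hDr
  have hpre_to_c : ∀ t, t ∈ (Dsub G P Q).verts → pre G r t c := by
    intro t ht
    exact pre_of_mem hc hCcact hCr (by rw [hC]; exact ht)
  have hcQt : c ∉ Q.tail := by
    cases Q with
    | nil => simp at hQh
    | cons a t =>
      have ha : a = c := by simpa using hQh
      rw [ha] at hQn
      exact (List.nodup_cons.1 hQn).1
  refine ⟨?_, ?_, ?_, ?_⟩
  · rw [hC]
    exact ⟨p, hdpc, fun x hx => dadj_into_c hG hP hQ hp3 hq3 hx⟩
  · rw [hC]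
    exact ⟨q, hdcq, fun y hy => dadj_outof_c hG hP hQ hp3 hq3 hy⟩
  · -- in-neighbours
    intro x hxadj
    constructor
    · intro hx
      have hxp : x = p := dadj_into_c hG hP hQ hp3 hq3 (by rw [hC] at hx; exact hx)
      rw [hxp]
      exact hpre_to_c p ((Dsub G P Q).mem_left hdpc)
    · intro hnx
      have hxp : x ≠ p := fun h => hnx (by rw [hC, h]; exact hdpc)
      have hxc : x ≠ c := fun h => G.loopless c (h ▸ hxadj)
      have hxr : x ≠ r := by
        rintro rfl
        have hxc_path : G.IsSimplePathFromTo [x, c] x c := isSimplePathFromTo_iff.2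
          ⟨by simp [hxadj], by simp [hxc], rfl, rfl⟩
        have hPeq : P = [x, c] := path_unique hG.2 hG.1 hP hxc_path
        rw [hPeq] at hp1
        simp only [List.dropLast_cons₂, List.dropLast_singleton, List.getLast?_cons,
          List.getLast?_singleton] at hp1
        exact hxp (by simpa using hp1)
      obtain ⟨Z, hZ, hmZ⟩ := (hG.2 x c hxadj).1
      obtain ⟨S, hSc, hSn, hSh, hSl, hSa⟩ := cycle_to_path hZ hmZ
      -- S : c → x along Z
      have hScne : S ≠ [] := by rintro rfl; simp at hSh
      have hdisj : ∀ w, w ∈ P → w ∈ S.tail → False := by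
        intro w hwP hwS
        have hcSt : c ∉ S.tail := by
          cases S with
          | nil => simp at hSh
          | cons a t =>
            have ha : a = c := by simpa using hSh
            rw [ha] at hSn
            exact (List.nodup_cons.1 hSn).1
        have hwc : w ≠ c := fun h => hcSt (h ▸ hwS)
        obtain ⟨aw, haw⟩ := exists_in_arc_of_mem_tail hwS
        have hawZ : (aw, w) ∈ arcs Z := hSa _ haw
        obtain ⟨cy, hcy⟩ := cycle_out_of_in hZ hmZ
        obtain ⟨S₂, hS2c, hS2n, hS2h, hS2l, hS2a⟩ := cycle_path_between hZ hawZ hcy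
        -- S₂ : w → c along Z
        obtain ⟨l₁, l₂, hPd⟩ := List.append_of_mem hwP
        have hsuff : (w :: l₂) <:+ P := ⟨l₁, hPd.symm⟩
        have hS1path : G.IsSimplePathFromTo (w :: l₂) w c := by
          refine isSimplePathFromTo_iff.2 ⟨hPc.suffix hsuff, hPn.sublist hsuff.sublist, rfl, ?_⟩
          rw [← hPl, hPd, show l₁ ++ w :: l₂ = l₁ ++ (w :: l₂) from rfl]
          exact (getLast?_append_right (by simp)).symm
        have hS2path : G.IsSimplePathFromTo S₂ w c :=
          isSimplePathFromTo_iff.2 ⟨hS2c, hS2n, hS2h, hS2l⟩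
        have hSS : (w :: l₂) = S₂ := path_unique hG.2 hG.1 hS1path hS2path
        have h2le : 2 ≤ (w :: l₂).length := length_two_le hS1path.2.1 hS1path.2.2 hwc
        obtain ⟨a', c', ha1, ha2, ha3⟩ := exists_last_arc _ h2le
        have hc' : c' = c := by
          rw [hS1path.2.2] at ha2; exact (Option.some_inj.1 ha2).symm
        rw [hc'] at ha3
        have ha'P : (a', c) ∈ arcs P := arcs_subset_of_infix hsuff.isInfix ha3
        have hap : a' = p := by
          have h1 := arcs_tgt_of_nodup hPn hPl ha'P
          have h2 := arcs_tgt_of_nodup hPn hPl hp3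
          rw [h1] at h2
          exact Option.some_inj.1 h2
        rw [hap] at ha3
        have hpcZ : (p, c) ∈ arcs Z := hS2a _ (hSS ▸ ha3)
        exact hxp (cycle_unique_in hZ hmZ hpcZ)
      have hPne : P ≠ [] := by rintro rfl; simp at hPh
      have hjunc : P.getLast? = S.head? := by rw [hPl, hSh]
      have hWpath : G.IsSimplePathFromTo (P ++ S.tail) r x := by
        refine isSimplePathFromTo_iff.2 ⟨chain'_append_tail hPc hSc hjunc, ?_, ?_, ?_⟩
        · exact List.nodup_append.2 ⟨hPn, hSn.sublist (List.tail_sublist _),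
            fun w hw w' hw' h => hdisj w hw (h ▸ hw')⟩
        · rw [head?_append_left hPne]; exact hPh
        · rw [getLast?_append_tail hPne hjunc hScne]; exact hSl
      obtain ⟨Qx, hQx⟩ := exists_path hG.1 x r
      have hCx : C G r x = Dsub G (P ++ S.tail) Qx := C_eq_Dsub hG hxr hWpath hQx
      obtain ⟨hDxcac, hDxr, hDxx⟩ := Dsub_isCactus hG hxr hWpath hQx
      constructor
      · refine pre_of_mem hxr (by rw [hCx]; exact hDxcac) (by rw [hCx]; exact hDxr) ?_
        rw [hCx]
        have hcW : c ∈ P ++ S.tail :=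
          List.mem_append.2 (Or.inl (List.mem_of_mem_getLast? hPl))
        have hWh : (P ++ S.tail).head? = some r := by
          rw [head?_append_left hPne]; exact hPh
        have hcW' : c ∈ (P ++ S.tail).tail := mem_tail_of_ne_head hWh hcW hc
        obtain ⟨ac, hac⟩ := exists_in_arc_of_mem_tail hcW'
        exact ⟨ac, Or.inr (arcs_P_dadj hG (isSimplePathFromTo_iff.1 hWpath).1 hac)⟩
      · intro hpre
        have hxmem : x ∈ (C G r x).verts := by rw [hCx]; exact hDxx
        have hxDmem : x ∈ (Dsub G P Q).verts := by
          have := hpre.1 hxmem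
          rw [hC] at this
          exact this
        obtain ⟨pw, hpw⟩ := hDcac.2.1 x hxDmem c hDc
        obtain ⟨T, hT, -, -⟩ := exists_path_of_walkFromTo hpw
        have hT' := isSimplePathFromTo_iff.1 hT
        have hTg : G.IsSimplePathFromTo T x c := isSimplePathFromTo_iff.2
          ⟨hT'.1.imp (fun a b h => dadj_adj h), hT'.2.1, hT'.2.2.1, hT'.2.2.2⟩
        have hxc_path : G.IsSimplePathFromTo [x, c] x c := isSimplePathFromTo_iff.2
          ⟨by simp [hxadj], by simp [hxc], rfl, rfl⟩
        have hTxc : T = [x, c] := path_unique hG.2 hG.1 hTg hxc_path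
        have hDxc : DAdj G P Q x c := adj_of_arcs hT'.1 (by rw [hTxc]; simp)
        exact hnx (by rw [hC]; exact hDxc)
  · -- out-neighbours
    intro y hyadj
    constructor
    · intro hy
      have hyq : y = q := dadj_outof_c hG hP hQ hp3 hq3 (by rw [hC] at hy; exact hy)
      rw [hyq]
      exact hpre_to_c q ((Dsub G P Q).mem_right hdcq)
    · intro hny
      have hyq : y ≠ q := fun h => hny (by rw [hC, h]; exact hdcq)
      have hyc : y ≠ c := by
        rintro rfl
        exact G.loopless y hyadj
      have hyr : y ≠ r := by
        rintro rfl
        have hcy_path : G.IsSimplePathFromTo [c, y] c y := isSimplePathFromTo_iff.2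
          ⟨by simp [hyadj], by simp [Ne.symm hyc], rfl, rfl⟩
        have hQeq : Q = [c, y] := path_unique hG.2 hG.1 hQ hcy_path
        rw [hQeq] at hq2
        exact hyq (by simpa using hq2)
      obtain ⟨Z, hZ, hmZ⟩ := (hG.2 c y hyadj).1
      obtain ⟨S, hSc, hSn, hSh, hSl, hSa⟩ := cycle_to_path hZ hmZ
      -- S : y → c along Z
      have hScne : S ≠ [] := by rintro rfl; simp at hSh
      have hdisj : ∀ w, w ∈ S → w ∈ Q.tail → False := by
        intro w hwS hwQ
        have hwc : w ≠ c := fun h => hcQt (h ▸ hwQ)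
        have hwS' : w ∈ S.dropLast := mem_dropLast_of_ne_getLast hSl hwS hwc
        obtain ⟨zw, hzw⟩ := exists_out_arc_of_mem_dropLast hwS'
        have hzwZ : (w, zw) ∈ arcs Z := hSa _ hzw
        obtain ⟨x0, hx0⟩ := cycle_in_of_out hZ hmZ
        obtain ⟨S₂, hS2c, hS2n, hS2h, hS2l, hS2a⟩ := cycle_path_between hZ hx0 hzwZ
        -- S₂ : c → w along Z
        obtain ⟨t₁, t₂, hQt⟩ := List.append_of_mem hwQ
        have hQd : Q = (c :: t₁) ++ w :: t₂ := by
          cases Q with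
          | nil => simp at hQh
          | cons a t =>
            have ha : a = c := by simpa using hQh
            simp only [List.tail_cons] at hQt
            rw [ha, hQt]
            simp
        have hpre' : ((c :: t₁) ++ [w]) <+: Q := ⟨t₂, by rw [hQd]; simp⟩
        have hS1path : G.IsSimplePathFromTo ((c :: t₁) ++ [w]) c w := by
          refine isSimplePathFromTo_iff.2 ⟨hQc.prefix hpre', hQn.sublist hpre'.sublist, rfl,
            List.getLast?_concat⟩
        have hS2path : G.IsSimplePathFromTo S₂ c w :=
          isSimplePathFromTo_iff.2 ⟨hS2c, hS2n, hS2h, hS2l⟩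
        have hSS : ((c :: t₁) ++ [w]) = S₂ := path_unique hG.2 hG.1 hS1path hS2path
        have h2le : 2 ≤ ((c :: t₁) ++ [w]).length := by simp
        obtain ⟨c0, z, hz1, hz2, hz3⟩ := exists_first_arc h2le
        have hc0 : c0 = c := by
          rw [hS1path.2.1] at hz1; exact (Option.some_inj.1 hz1).symm
        rw [hc0] at hz3
        have hzQ : (c, z) ∈ arcs Q := arcs_subset_of_infix hpre'.isInfix hz3
        have hzq : z = q := by
          have h1 := arcs_src_of_nodup hQn hQh hzQ
          have h2 := arcs_src_of_nodup hQn hQh hq3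
          rw [h1] at h2
          exact Option.some_inj.1 h2
        rw [hzq] at hz3
        have hcqZ : (c, q) ∈ arcs S₂ := hSS ▸ hz3
        exact hyq (cycle_unique_out hZ hmZ (hS2a _ hcqZ))
      have hQne : Q ≠ [] := by rintro rfl; simp at hQh
      have hjunc : S.getLast? = Q.head? := by rw [hSl, hQh]
      have hWpath : G.IsSimplePathFromTo (S ++ Q.tail) y r := by
        refine isSimplePathFromTo_iff.2 ⟨chain'_append_tail hSc hQc hjunc, ?_, ?_, ?_⟩
        · exact List.nodup_append.2 ⟨hSn, hQn.sublist (List.tail_sublist _),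
            fun w hw w' hw' h => hdisj w hw (h ▸ hw')⟩
        · rw [head?_append_left hScne]; exact hSh
        · rw [getLast?_append_tail hScne hjunc hQne]; exact hQl
      obtain ⟨Py, hPy⟩ := exists_path hG.1 r y
      have hCy : C G r y = Dsub G Py (S ++ Q.tail) := C_eq_Dsub hG hyr hPy hWpath
      obtain ⟨hDycac, hDyr, hDyy⟩ := Dsub_isCactus hG hyr hPy hWpath
      constructor
      · refine pre_of_mem hyr (by rw [hCy]; exact hDycac) (by rw [hCy]; exact hDyr) ?_
        rw [hCy]
        have hcW : c ∈ S ++ Q.tail :=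
          List.mem_append.2 (Or.inl (List.mem_of_mem_getLast? hSl))
        have hWh : (S ++ Q.tail).head? = some y := by
          rw [head?_append_left hScne]; exact hSh
        have hcW' : c ∈ (S ++ Q.tail).tail :=
          mem_tail_of_ne_head hWh hcW (Ne.symm hyc)
        obtain ⟨ac, hac⟩ := exists_in_arc_of_mem_tail hcW'
        exact ⟨ac, Or.inr (arcs_Q_dadj hG (isSimplePathFromTo_iff.1 hWpath).1 hac)⟩
      · intro hpre
        have hymem : y ∈ (C G r y).verts := by rw [hCy]; exact hDyy
        have hyDmem : y ∈ (Dsub G P Q).verts := by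
          have := hpre.1 hymem
          rw [hC] at this
          exact this
        obtain ⟨pw, hpw⟩ := hDcac.2.1 c hDc y hyDmem
        obtain ⟨T, hT, -, -⟩ := exists_path_of_walkFromTo hpw
        have hT' := isSimplePathFromTo_iff.1 hT
        have hTg : G.IsSimplePathFromTo T c y := isSimplePathFromTo_iff.2
          ⟨hT'.1.imp (fun a b h => dadj_adj h), hT'.2.1, hT'.2.2.1, hT'.2.2.2⟩
        have hcy_path : G.IsSimplePathFromTo [c, y] c y := isSimplePathFromTo_iff.2
          ⟨by simp [hyadj], by simp [Ne.symm hyc], rfl, rfl⟩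
        have hTcy : T = [c, y] := path_unique hG.2 hG.1 hTg hcy_path
        have hDcy : DAdj G P Q c y := adj_of_arcs hT'.1 (by rw [hTcy]; simp)
        exact hny (by rw [hC]; exact hDcy)
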